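/- arXiv:cs/0601090 — 10 statements merged into one kernel-verified Lean document; each statement's English description precedes it below -/
import Mathlib

section
/- Let G = (V' : V'', E) be a bipartite Δ-regular connected graph with parts of equal size n > 1, and let γ be the ratio of the second largest eigenvalue of the adjacency matrix of G to Δ. Let χ : V' ∪ V'' → [0,1] be any function, and set σ = (1/n) Σ_{u ∈ V'} χ(u) and τ = (1/n) Σ_{v ∈ V''} χ(v). Then (1/(Δn)) Σ_{u ∈ V'} Σ_{v ∈ N(u)} χ(u)χ(v) ≤ στ + γ·√(σ(1−σ)τ(1−τ)) ≤ (1−γ)στ + γ·√(στ), where N(u) denotes the set of neighbors of u in G. -/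
open Matrix BigOperators

private lemma sqrt_amgm (a b : ℝ) (ha : 0 ≤ a) (hb : 0 ≤ b) :
    Real.sqrt (a * b) ≤ (a + b) / 2 := by
  nlinarith [Real.sq_sqrt (mul_nonneg ha hb), Real.sqrt_nonneg (a * b), sq_nonneg (a - b),
    sq_nonneg (a + b - 2 * Real.sqrt (a * b))]

set_option maxHeartbeats 1000000 in
/-- Lemma on bipartite expander mixing with [0,1]-valued vertex functions.
`G` is a bipartite `Δ`-regular connected graph on parts `V' = Fin n` (embedded via `Sum.inl`)
and `V'' = Fin n` (via `Sum.inr`), with `n > 1`; `γ * Δ` is the second largest eigenvalue of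
the adjacency matrix of `G`, characterized (Courant–Fischer, using that the all-one vector is a
top eigenvector of the adjacency matrix of a regular graph) as the greatest Rayleigh quotient
over nonzero vectors orthogonal to the all-one vector. -/
theorem stmt_0 (n Δ : ℕ) (hn : 1 < n) (hΔ : 0 < Δ)
    (G : SimpleGraph (Fin n ⊕ Fin n)) [DecidableRel G.Adj]
    (hbipL : ∀ a b : Fin n, ¬ G.Adj (Sum.inl a) (Sum.inl b))
    (hbipR : ∀ a b : Fin n, ¬ G.Adj (Sum.inr a) (Sum.inr b))
    (hreg : ∀ v, G.degree v = Δ)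
    (hconn : G.Connected)
    (γ : ℝ)
    (hγ : IsGreatest {ρ : ℝ | ∃ x : (Fin n ⊕ Fin n) → ℝ, x ≠ 0 ∧
        (x ⬝ᵥ (fun _ => 1)) = 0 ∧
        x ⬝ᵥ ((G.adjMatrix ℝ).mulVec x) = ρ * (x ⬝ᵥ x)} (γ * Δ))
    (χ : (Fin n ⊕ Fin n) → ℝ)
    (hχ : ∀ v, χ v ∈ Set.Icc (0 : ℝ) 1)
    (σ τ : ℝ)
    (hσ : σ = (1 / (n : ℝ)) * ∑ u : Fin n, χ (Sum.inl u))
    (hτ : τ = (1 / (n : ℝ)) * ∑ v : Fin n, χ (Sum.inr v)) :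
    (1 / ((Δ : ℝ) * n)) *
        ∑ u : Fin n, ∑ v ∈ G.neighborFinset (Sum.inl u), χ (Sum.inl u) * χ v
      ≤ σ * τ + γ * Real.sqrt (σ * (1 - σ) * τ * (1 - τ)) ∧
    σ * τ + γ * Real.sqrt (σ * (1 - σ) * τ * (1 - τ))
      ≤ (1 - γ) * σ * τ + γ * Real.sqrt (σ * τ) := by
  have hnR : (0:ℝ) < n := by exact_mod_cast Nat.lt_of_lt_of_le Nat.zero_lt_one hn.le
  have hΔR : (0:ℝ) < Δ := by exact_mod_cast hΔ
  set A : Matrix (Fin n ⊕ Fin n) (Fin n ⊕ Fin n) ℝ := G.adjMatrix ℝ with hAdef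
  -- symmetry
  have hsym : ∀ x y : (Fin n ⊕ Fin n) → ℝ, x ⬝ᵥ (A *ᵥ y) = (A *ᵥ x) ⬝ᵥ y := by
    intro x y
    rw [Matrix.dotProduct_mulVec, ← Matrix.mulVec_transpose, hAdef,
      SimpleGraph.transpose_adjMatrix]
  -- basic vectors
  set eL : Fin n ⊕ Fin n → ℝ := Sum.elim (fun _ => 1) (fun _ => 0) with heL
  set eR : Fin n ⊕ Fin n → ℝ := Sum.elim (fun _ => 0) (fun _ => 1) with heR
  set yL : Fin n ⊕ Fin n → ℝ := Sum.elim (fun u => χ (Sum.inl u) - σ) (fun _ => 0) with hyL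
  set yR : Fin n ⊕ Fin n → ℝ := Sum.elim (fun _ => 0) (fun v => χ (Sum.inr v) - τ) with hyR
  -- sums of χ
  have hsumσ : ∑ u : Fin n, χ (Sum.inl u) = n * σ := by
    rw [hσ]; field_simp
  have hsumτ : ∑ v : Fin n, χ (Sum.inr v) = n * τ := by
    rw [hτ]; field_simp
  have hyLsum : ∑ u : Fin n, (χ (Sum.inl u) - σ) = 0 := by
    rw [Finset.sum_sub_distrib, hsumσ, Finset.sum_const, Finset.card_univ, Fintype.card_fin,
      nsmul_eq_mul]
    ring
  have hyRsum : ∑ v : Fin n, (χ (Sum.inr v) - τ) = 0 := by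
    rw [Finset.sum_sub_distrib, hsumτ, Finset.sum_const, Finset.card_univ, Fintype.card_fin,
      nsmul_eq_mul]
    ring
  -- neighbor structure
  have hNL : ∀ (u : Fin n) (v), v ∈ G.neighborFinset (Sum.inl u) → ∃ w, v = Sum.inr w := by
    intro u v hv
    rcases v with a | w
    · exact absurd ((SimpleGraph.mem_neighborFinset G _ _).mp hv) (hbipL u a)
    · exact ⟨w, rfl⟩
  have hNR : ∀ (w : Fin n) (v), v ∈ G.neighborFinset (Sum.inr w) → ∃ u, v = Sum.inl u := by
    intro w v hv
    rcases v with u | b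
    · exact ⟨u, rfl⟩
    · exact absurd ((SimpleGraph.mem_neighborFinset G _ _).mp hv) (hbipR w b)
  have hcardL : ∀ u : Fin n, (G.neighborFinset (Sum.inl u)).card = Δ := fun u => hreg _
  have hcardR : ∀ w : Fin n, (G.neighborFinset (Sum.inr w)).card = Δ := fun w => hreg _
  -- A acting on basic vectors
  have hAeR : A *ᵥ eR = fun w => (Δ:ℝ) * eL w := by
    funext w
    rw [hAdef, SimpleGraph.adjMatrix_mulVec_apply]
    cases w with
    | inl u =>
        have h1 : ∀ v ∈ G.neighborFinset (Sum.inl u), eR v = 1 := by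
          intro v hv; obtain ⟨w, rfl⟩ := hNL u v hv; simp [heR]
        rw [Finset.sum_congr rfl h1, Finset.sum_const, hcardL u]
        simp [heL]
    | inr w =>
        have h1 : ∀ v ∈ G.neighborFinset (Sum.inr w), eR v = 0 := by
          intro v hv; obtain ⟨u, rfl⟩ := hNR w v hv; simp [heR]
        rw [Finset.sum_congr rfl h1, Finset.sum_const]
        simp [heL]
  have hAeL : A *ᵥ eL = fun w => (Δ:ℝ) * eR w := by
    funext w
    rw [hAdef, SimpleGraph.adjMatrix_mulVec_apply]
    cases w with
    | inl u =>
        have h1 : ∀ v ∈ G.neighborFinset (Sum.inl u), eL v = 0 := by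
          intro v hv; obtain ⟨w, rfl⟩ := hNL u v hv; simp [heL]
        rw [Finset.sum_congr rfl h1, Finset.sum_const]
        simp [heR]
    | inr w =>
        have h1 : ∀ v ∈ G.neighborFinset (Sum.inr w), eL v = 1 := by
          intro v hv; obtain ⟨u, rfl⟩ := hNR w v hv; simp [heL]
        rw [Finset.sum_congr rfl h1, Finset.sum_const, hcardR w]
        simp [heR]
  have hAyLinl : ∀ u : Fin n, (A *ᵥ yL) (Sum.inl u) = 0 := by
    intro u
    rw [hAdef, SimpleGraph.adjMatrix_mulVec_apply]
    apply Finset.sum_eq_zero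
    intro v hv; obtain ⟨w, rfl⟩ := hNL u v hv; simp [hyL]
  have hAyRinr : ∀ w : Fin n, (A *ᵥ yR) (Sum.inr w) = 0 := by
    intro w
    rw [hAdef, SimpleGraph.adjMatrix_mulVec_apply]
    apply Finset.sum_eq_zero
    intro v hv; obtain ⟨u, rfl⟩ := hNR w v hv; simp [hyR]
  -- quadratic forms on one side vanish
  have hyLAyL : yL ⬝ᵥ (A *ᵥ yL) = 0 := by
    simp only [dotProduct, Fintype.sum_sum_type]
    rw [Finset.sum_eq_zero fun u _ => by rw [hAyLinl u, mul_zero],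
      Finset.sum_eq_zero fun w _ => by simp [hyL], add_zero]
  have hyRAyR : yR ⬝ᵥ (A *ᵥ yR) = 0 := by
    simp only [dotProduct, Fintype.sum_sum_type]
    rw [Finset.sum_eq_zero fun u _ => by simp [hyR],
      Finset.sum_eq_zero fun w _ => by rw [hAyRinr w, mul_zero], add_zero]
  -- basic dot products
  have hyLyL : yL ⬝ᵥ yL = ∑ u : Fin n, (χ (Sum.inl u) - σ)^2 := by
    simp only [dotProduct, Fintype.sum_sum_type, hyL, Sum.elim_inl, Sum.elim_inr,
      mul_zero, Finset.sum_const_zero, add_zero, sq]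
  have hyRyR : yR ⬝ᵥ yR = ∑ v : Fin n, (χ (Sum.inr v) - τ)^2 := by
    simp only [dotProduct, Fintype.sum_sum_type, hyR, Sum.elim_inl, Sum.elim_inr,
      mul_zero, zero_mul, Finset.sum_const_zero, zero_add, sq]
  have hyLyR : yL ⬝ᵥ yR = 0 := by
    simp only [dotProduct, Fintype.sum_sum_type, hyL, hyR, Sum.elim_inl, Sum.elim_inr,
      mul_zero, zero_mul, Finset.sum_const_zero, zero_add, add_zero]
  set a : ℝ := ∑ u : Fin n, (χ (Sum.inl u) - σ)^2 with hadef
  set b : ℝ := ∑ v : Fin n, (χ (Sum.inr v) - τ)^2 with hbdef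
  have ha0 : 0 ≤ a := Finset.sum_nonneg fun _ _ => sq_nonneg _
  have hb0 : 0 ≤ b := Finset.sum_nonneg fun _ _ => sq_nonneg _
  -- γ is nonnegative
  have hγ0 : 0 ≤ γ := by
    set i0 : Fin n := ⟨0, by omega⟩ with hi0
    set i1 : Fin n := ⟨1, hn⟩ with hi1
    have hne : i0 ≠ i1 := by simp [hi0, hi1, Fin.ext_iff]
    set x : Fin n ⊕ Fin n → ℝ :=
      Sum.elim (fun u => if u = i0 then 1 else if u = i1 then -1 else 0) (fun _ => 0) with hx
    have hx0 : x ≠ 0 := by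
      intro h
      have h2 := congrFun h (Sum.inl i0)
      simp [hx] at h2
    have hfun : ∀ u : Fin n, (if u = i0 then (1:ℝ) else if u = i1 then -1 else 0)
        = (if u = i0 then (1:ℝ) else 0) + (if u = i1 then (-1:ℝ) else 0) := by
      intro u
      by_cases h0 : u = i0
      · subst h0; simp [hne]
      · by_cases h1 : u = i1 <;> simp [h0, h1, Ne.symm hne]
    have hxone : (x ⬝ᵥ fun _ => (1:ℝ)) = 0 := by
      simp only [dotProduct, Fintype.sum_sum_type, hx, Sum.elim_inl, Sum.elim_inr,
        mul_one, Finset.sum_const_zero, add_zero, zero_mul]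
      rw [Finset.sum_congr rfl fun u _ => hfun u, Finset.sum_add_distrib]
      simp
    have hAx : ∀ u : Fin n, (A *ᵥ x) (Sum.inl u) = 0 := by
      intro u
      rw [hAdef, SimpleGraph.adjMatrix_mulVec_apply]
      apply Finset.sum_eq_zero
      intro v hv; obtain ⟨w, rfl⟩ := hNL u v hv; simp [hx]
    have hxAx : x ⬝ᵥ (A *ᵥ x) = 0 := by
      simp only [dotProduct, Fintype.sum_sum_type]
      rw [Finset.sum_eq_zero fun u _ => by rw [hAx u, mul_zero],
        Finset.sum_eq_zero fun w _ => by simp [hx], add_zero]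
    have h0mem : (0:ℝ) ≤ γ * Δ := hγ.2 ⟨x, hx0, hxone, by rw [hxAx]; ring⟩
    by_contra h
    push_neg at h
    nlinarith [h0mem, hΔR]
  -- key Rayleigh bound
  have hkey : yL ⬝ᵥ (A *ᵥ yR) ≤ γ * Δ * Real.sqrt (a * b) := by
    rcases eq_or_lt_of_le ha0 with ha | ha
    · have hyL0 : yL = 0 := by
        funext w
        cases w with
        | inl u =>
            have h := (Finset.sum_eq_zero_iff_of_nonneg
              (fun i _ => sq_nonneg (χ (Sum.inl i) - σ))).mp ha.symm u (Finset.mem_univ u)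
            have h2 : χ (Sum.inl u) - σ = 0 := sq_eq_zero_iff.mp h
            simp [hyL, h2]
        | inr w => simp [hyL]
      rw [hyL0, zero_dotProduct]
      exact mul_nonneg (mul_nonneg hγ0 hΔR.le) (Real.sqrt_nonneg _)
    · rcases eq_or_lt_of_le hb0 with hb | hb
      · have hyR0 : yR = 0 := by
          funext w
          cases w with
          | inl u => simp [hyR]
          | inr w =>
              have h := (Finset.sum_eq_zero_iff_of_nonneg
                (fun i _ => sq_nonneg (χ (Sum.inr i) - τ))).mp hb.symm w (Finset.mem_univ w)
              have h2 : χ (Sum.inr w) - τ = 0 := sq_eq_zero_iff.mp h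
              simp [hyR, h2]
        rw [hyR0, Matrix.mulVec_zero, dotProduct_zero]
        exact mul_nonneg (mul_nonneg hγ0 hΔR.le) (Real.sqrt_nonneg _)
      · set sa := Real.sqrt a with hsa
        set sb := Real.sqrt b with hsb
        have hsa0 : 0 < sa := Real.sqrt_pos.mpr ha
        have hsb0 : 0 < sb := Real.sqrt_pos.mpr hb
        have hsa2 : sa^2 = a := Real.sq_sqrt ha0
        have hsb2 : sb^2 = b := Real.sq_sqrt hb0
        set z : Fin n ⊕ Fin n → ℝ := sb • yL + sa • yR with hz
        have hz0 : z ≠ 0 := by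
          intro h
          have hall : ∀ u : Fin n, χ (Sum.inl u) - σ = 0 := by
            intro u
            have hzu : z (Sum.inl u) = sb * (χ (Sum.inl u) - σ) := by
              rw [hz]
              simp [hyL, hyR]
            have h3 := congrFun h (Sum.inl u)
            rw [hzu] at h3
            exact (mul_eq_zero.mp h3).resolve_left hsb0.ne'
          have ha' : a = 0 := Finset.sum_eq_zero fun u _ => by rw [hall u]; ring
          exact ha.ne' ha'
        have hzone : (z ⬝ᵥ fun _ => (1:ℝ)) = 0 := by
          simp only [dotProduct, Fintype.sum_sum_type, hz, Pi.add_apply, Pi.smul_apply,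
            smul_eq_mul, hyL, hyR, Sum.elim_inl, Sum.elim_inr, mul_zero, add_zero, zero_add,
            mul_one]
          rw [← Finset.mul_sum, ← Finset.mul_sum, hyLsum, hyRsum]
          ring
        have hzAz : z ⬝ᵥ (A *ᵥ z) = 2 * (sa * sb) * (yL ⬝ᵥ (A *ᵥ yR)) := by
          rw [hz, Matrix.mulVec_add, Matrix.mulVec_smul, Matrix.mulVec_smul]
          simp only [add_dotProduct, dotProduct_add, smul_dotProduct,
            dotProduct_smul, smul_eq_mul]
          rw [hyLAyL, hyRAyR,
            show yR ⬝ᵥ (A *ᵥ yL) = yL ⬝ᵥ (A *ᵥ yR) by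
              rw [hsym yR yL, dotProduct_comm]]
          ring
        have hzz : z ⬝ᵥ z = 2 * (a * b) := by
          rw [hz]
          simp only [add_dotProduct, dotProduct_add, smul_dotProduct,
            dotProduct_smul, smul_eq_mul]
          rw [hyLyL, hyRyR, hyLyR,
            show yR ⬝ᵥ yL = (0:ℝ) by rw [dotProduct_comm]; exact hyLyR]
          linear_combination a * hsb2 + b * hsa2
        have hzzpos : 0 < z ⬝ᵥ z := by rw [hzz]; positivity
        have hmem : z ⬝ᵥ (A *ᵥ z) / (z ⬝ᵥ z) ≤ γ * Δ :=
          hγ.2 ⟨z, hz0, hzone, by field_simp⟩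
        have h2 : z ⬝ᵥ (A *ᵥ z) ≤ γ * Δ * (z ⬝ᵥ z) := by
          rw [div_le_iff₀ hzzpos] at hmem
          linarith [hmem]
        rw [hzAz, hzz] at h2
        have hrhs : γ * Δ * (2 * (a * b)) = 2 * (sa * sb) * (γ * Δ * (sa * sb)) := by
          rw [← hsa2, ← hsb2]; ring
        have h3 : yL ⬝ᵥ (A *ᵥ yR) ≤ γ * Δ * (sa * sb) := by
          have hpos : 0 < 2 * (sa * sb) := by positivity
          apply le_of_mul_le_mul_left _ hpos
          calc 2 * (sa * sb) * (yL ⬝ᵥ (A *ᵥ yR)) ≤ γ * ↑Δ * (2 * (a * b)) := h2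
            _ = 2 * (sa * sb) * (γ * ↑Δ * (sa * sb)) := hrhs
        rw [Real.sqrt_mul ha0, ← hsa, ← hsb]
        exact h3
  -- σ τ bounds
  have hσ0 : 0 ≤ σ := by
    rw [hσ]
    exact mul_nonneg (by positivity) (Finset.sum_nonneg fun u _ => (hχ _).1)
  have hτ0 : 0 ≤ τ := by
    rw [hτ]
    exact mul_nonneg (by positivity) (Finset.sum_nonneg fun v _ => (hχ _).1)
  have hσ1 : σ ≤ 1 := by
    rw [hσ]
    have h : ∑ u : Fin n, χ (Sum.inl u) ≤ n := by
      calc ∑ u : Fin n, χ (Sum.inl u) ≤ ∑ _u : Fin n, (1:ℝ) :=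
            Finset.sum_le_sum fun u _ => (hχ _).2
        _ = n := by simp
    calc (1 / (n:ℝ)) * ∑ u : Fin n, χ (Sum.inl u) ≤ (1 / (n:ℝ)) * n :=
          mul_le_mul_of_nonneg_left h (by positivity)
      _ = 1 := by field_simp
  have hτ1 : τ ≤ 1 := by
    rw [hτ]
    have h : ∑ v : Fin n, χ (Sum.inr v) ≤ n := by
      calc ∑ v : Fin n, χ (Sum.inr v) ≤ ∑ _v : Fin n, (1:ℝ) :=
            Finset.sum_le_sum fun v _ => (hχ _).2
        _ = n := by simp
    calc (1 / (n:ℝ)) * ∑ v : Fin n, χ (Sum.inr v) ≤ (1 / (n:ℝ)) * n :=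
          mul_le_mul_of_nonneg_left h (by positivity)
      _ = 1 := by field_simp
  -- variance bounds
  have hafin : a ≤ n * (σ * (1 - σ)) := by
    have hsq : ∑ u : Fin n, (χ (Sum.inl u))^2 ≤ ∑ u : Fin n, χ (Sum.inl u) :=
      Finset.sum_le_sum fun u _ => by nlinarith [(hχ (Sum.inl u)).1, (hχ (Sum.inl u)).2]
    have hexp : a = (∑ u : Fin n, (χ (Sum.inl u))^2) - n * σ^2 := by
      rw [hadef,
        Finset.sum_congr rfl fun u _ =>
          show (χ (Sum.inl u) - σ)^2 = (χ (Sum.inl u))^2 - 2*σ*χ (Sum.inl u) + σ^2 by ring,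
        Finset.sum_add_distrib, Finset.sum_sub_distrib, ← Finset.mul_sum, hsumσ,
        Finset.sum_const, Finset.card_univ, Fintype.card_fin, nsmul_eq_mul]
      ring
    linarith [hsq, hexp, hsumσ]
  have hbfin : b ≤ n * (τ * (1 - τ)) := by
    have hsq : ∑ v : Fin n, (χ (Sum.inr v))^2 ≤ ∑ v : Fin n, χ (Sum.inr v) :=
      Finset.sum_le_sum fun v _ => by nlinarith [(hχ (Sum.inr v)).1, (hχ (Sum.inr v)).2]
    have hexp : b = (∑ v : Fin n, (χ (Sum.inr v))^2) - n * τ^2 := by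
      rw [hbdef,
        Finset.sum_congr rfl fun v _ =>
          show (χ (Sum.inr v) - τ)^2 = (χ (Sum.inr v))^2 - 2*τ*χ (Sum.inr v) + τ^2 by ring,
        Finset.sum_add_distrib, Finset.sum_sub_distrib, ← Finset.mul_sum, hsumτ,
        Finset.sum_const, Finset.card_univ, Fintype.card_fin, nsmul_eq_mul]
      ring
    linarith [hsq, hexp, hsumτ]
  -- the main sum as a quadratic form
  set S : ℝ := ∑ u : Fin n, ∑ v ∈ G.neighborFinset (Sum.inl u), χ (Sum.inl u) * χ v with hSdef
  set χL : Fin n ⊕ Fin n → ℝ := Sum.elim (fun u => χ (Sum.inl u)) (fun _ => 0) with hχLdef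
  set χR : Fin n ⊕ Fin n → ℝ := Sum.elim (fun _ => 0) (fun v => χ (Sum.inr v)) with hχRdef
  have hS1 : χL ⬝ᵥ (A *ᵥ χR) = S := by
    simp only [dotProduct, Fintype.sum_sum_type]
    have hterm : ∀ u : Fin n, χL (Sum.inl u) * (A *ᵥ χR) (Sum.inl u)
        = ∑ v ∈ G.neighborFinset (Sum.inl u), χ (Sum.inl u) * χ v := by
      intro u
      rw [hAdef, SimpleGraph.adjMatrix_mulVec_apply]
      rw [Finset.sum_congr rfl (fun v hv => by
        obtain ⟨w, rfl⟩ := hNL u v hv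
        show χR (Sum.inr w) = χ (Sum.inr w)
        simp [hχRdef]), Finset.mul_sum]
      exact Finset.sum_congr rfl fun v _ => by simp [hχLdef]
    have hzero : ∑ w : Fin n, χL (Sum.inr w) * (A *ᵥ χR) (Sum.inr w) = 0 :=
      Finset.sum_eq_zero fun w _ => by simp [hχLdef]
    rw [hzero, add_zero, Finset.sum_congr rfl fun u _ => hterm u, hSdef]
  have hχLdecomp : χL = σ • eL + yL := by
    funext w
    cases w with
    | inl u => simp [hχLdef, heL, hyL]
    | inr w => simp [hχLdef, heL, hyL]
  have hχRdecomp : χR = τ • eR + yR := by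
    funext w
    cases w with
    | inl u => simp [hχRdef, heR, hyR]
    | inr w => simp [hχRdef, heR, hyR]
  -- the four cross terms
  have d1 : eL ⬝ᵥ (A *ᵥ eR) = Δ * n := by
    rw [hAeR]
    simp only [dotProduct, Fintype.sum_sum_type, heL, Sum.elim_inl, Sum.elim_inr,
      mul_zero, mul_one, one_mul, zero_mul, Finset.sum_const_zero, add_zero,
      Finset.sum_const, Finset.card_univ, Fintype.card_fin, nsmul_eq_mul]
    ring
  have d2 : eL ⬝ᵥ (A *ᵥ yR) = 0 := by
    rw [hsym, hAeL]
    simp only [dotProduct, Fintype.sum_sum_type, heR, hyR, Sum.elim_inl, Sum.elim_inr,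
      mul_zero, zero_mul, mul_one, Finset.sum_const_zero, zero_add]
    rw [← Finset.mul_sum, hyRsum, mul_zero]
  have d3 : yL ⬝ᵥ (A *ᵥ eR) = 0 := by
    rw [hAeR]
    simp only [dotProduct, Fintype.sum_sum_type, heL, hyL, Sum.elim_inl, Sum.elim_inr,
      mul_zero, zero_mul, mul_one, Finset.sum_const_zero, add_zero]
    rw [← Finset.sum_mul, hyLsum, zero_mul]
  have hSval : S = σ * τ * ((Δ:ℝ) * n) + yL ⬝ᵥ (A *ᵥ yR) := by
    rw [← hS1, hχLdecomp, hχRdecomp, Matrix.mulVec_add, Matrix.mulVec_smul]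
    simp only [add_dotProduct, dotProduct_add, smul_dotProduct,
      dotProduct_smul, smul_eq_mul]
    rw [d1, d2, d3]
    ring
  constructor
  · -- first inequality
    have hQ0 : 0 ≤ σ * (1 - σ) * τ * (1 - τ) :=
      mul_nonneg (mul_nonneg (mul_nonneg hσ0 (by linarith)) hτ0) (by linarith)
    have hsqrtab : Real.sqrt (a * b) ≤ n * Real.sqrt (σ * (1 - σ) * τ * (1 - τ)) := by
      have h1 : a * b ≤ (n * (σ * (1 - σ))) * (n * (τ * (1 - τ))) := by
        exact mul_le_mul hafin hbfin hb0
          (mul_nonneg hnR.le (mul_nonneg hσ0 (by linarith)))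
      calc Real.sqrt (a * b) ≤ Real.sqrt ((n * (σ * (1 - σ))) * (n * (τ * (1 - τ)))) :=
            Real.sqrt_le_sqrt h1
        _ = n * Real.sqrt (σ * (1 - σ) * τ * (1 - τ)) := by
            rw [show (n * (σ * (1 - σ))) * (n * (τ * (1 - τ)))
                = (n:ℝ)^2 * (σ * (1 - σ) * τ * (1 - τ)) by ring,
              Real.sqrt_mul (sq_nonneg _), Real.sqrt_sq hnR.le]
    have hfinal : S ≤ σ * τ * ((Δ:ℝ) * n)
        + γ * Δ * (n * Real.sqrt (σ * (1 - σ) * τ * (1 - τ))) := by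
      have h2 : yL ⬝ᵥ (A *ᵥ yR) ≤ γ * Δ * (n * Real.sqrt (σ * (1 - σ) * τ * (1 - τ))) := by
        calc yL ⬝ᵥ (A *ᵥ yR) ≤ γ * Δ * Real.sqrt (a * b) := hkey
          _ ≤ γ * Δ * (n * Real.sqrt (σ * (1 - σ) * τ * (1 - τ))) :=
              mul_le_mul_of_nonneg_left hsqrtab (by positivity)
      linarith [hSval, h2]
    calc (1 / ((Δ:ℝ) * n)) * S
        ≤ (1 / ((Δ:ℝ) * n)) * (σ * τ * ((Δ:ℝ) * n)
            + γ * Δ * (n * Real.sqrt (σ * (1 - σ) * τ * (1 - τ)))) :=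
          mul_le_mul_of_nonneg_left hfinal (by positivity)
      _ = σ * τ + γ * Real.sqrt (σ * (1 - σ) * τ * (1 - τ)) := by
          field_simp
  · -- second inequality
    set p := Real.sqrt (σ * τ) with hp
    set q := Real.sqrt ((1 - σ) * (1 - τ)) with hq
    have hp0 : 0 ≤ p := Real.sqrt_nonneg _
    have hp2 : p^2 = σ * τ := Real.sq_sqrt (mul_nonneg hσ0 hτ0)
    have hfact : Real.sqrt (σ * (1 - σ) * τ * (1 - τ)) = p * q := by
      rw [show σ * (1 - σ) * τ * (1 - τ) = (σ * τ) * ((1 - σ) * (1 - τ)) by ring,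
        Real.sqrt_mul (mul_nonneg hσ0 hτ0)]
    have hple : p ≤ (σ + τ) / 2 := sqrt_amgm σ τ hσ0 hτ0
    have hqle : q ≤ ((1 - σ) + (1 - τ)) / 2 := sqrt_amgm _ _ (by linarith) (by linarith)
    have hpq1 : p + q ≤ 1 := by linarith
    have hkey2 : σ * τ + p * q ≤ p := by
      nlinarith [mul_le_mul_of_nonneg_left hpq1 hp0, hp2]
    rw [hfact]
    nlinarith [mul_le_mul_of_nonneg_left hkey2 hγ0]
end

section
/- Let G = (V' : V'', E) be a bipartite Δ-regular connected graph with parts of equal size n > 1, and let γ be the ratio of the second largest eigenvalue of the adjacency matrix of G to Δ. Let S ⊆ V' and T ⊆ V'' be subsets of sizes |S| = σn and |T| = τn with σ + τ > 0. Then the sum of the degrees of the vertices in the subgraph G_{S∪T} of G induced by S ∪ T satisfies Σ_{u ∈ S∪T} deg_{S∪T}(u) ≤ 2((1−γ)στ + γ√(στ))·Δn. -/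
open Matrix BigOperators


private lemma sqrt_amgm_s1 {x y : ℝ} (hx : 0 ≤ x) (hy : 0 ≤ y) :
    Real.sqrt (x * y) ≤ (x + y) / 2 := by
  have h1 : x * y ≤ ((x + y) / 2) ^ 2 := by nlinarith [sq_nonneg (x - y)]
  calc Real.sqrt (x * y) ≤ Real.sqrt (((x + y) / 2) ^ 2) := Real.sqrt_le_sqrt h1
    _ = (x + y) / 2 := Real.sqrt_sq (by linarith)

private lemma key_sqrt {σ τ : ℝ} (h0 : 0 ≤ σ) (h1 : σ ≤ 1) (h0' : 0 ≤ τ) (h1' : τ ≤ 1) :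
    Real.sqrt (σ * (1 - σ) * (τ * (1 - τ))) ≤ Real.sqrt (σ * τ) - σ * τ := by
  have hστ : 0 ≤ σ * τ := mul_nonneg h0 h0'
  have e1 : σ * (1 - σ) * (τ * (1 - τ)) = (σ * τ) * ((1 - σ) * (1 - τ)) := by ring
  rw [e1, Real.sqrt_mul hστ]
  have h2 : Real.sqrt ((1 - σ) * (1 - τ)) ≤ 1 - Real.sqrt (σ * τ) := by
    have := sqrt_amgm_s1 (x := 1 - σ) (y := 1 - τ) (by linarith) (by linarith)
    have h3 : Real.sqrt (σ * τ) ≤ (σ + τ) / 2 := sqrt_amgm_s1 h0 h0'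
    linarith
  have h4 : Real.sqrt (σ * τ) * Real.sqrt ((1 - σ) * (1 - τ))
      ≤ Real.sqrt (σ * τ) * (1 - Real.sqrt (σ * τ)) :=
    mul_le_mul_of_nonneg_left h2 (Real.sqrt_nonneg _)
  have h5 : Real.sqrt (σ * τ) * Real.sqrt (σ * τ) = σ * τ := Real.mul_self_sqrt hστ
  nlinarith

private lemma aux_expand {n : ℕ} (B : Fin n → Fin n → ℝ) (Δ : ℝ)
    (hrow : ∀ a, ∑ b, B a b = Δ) (hcol : ∀ b, ∑ a, B a b = Δ)
    (p q : Fin n → ℝ) (σ τ : ℝ) (hp : ∑ a, p a = σ * n) (hq : ∑ b, q b = τ * n) :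
    ∑ a, ∑ b, B a b * (p a - σ) * (q b - τ)
      = (∑ a, ∑ b, B a b * p a * q b) - σ * τ * Δ * n := by
  have e3 : ∑ a, ∑ b, B a b * q b = Δ * (τ * n) := by
    rw [Finset.sum_comm]
    have : ∀ b, ∑ a, B a b * q b = Δ * q b := by
      intro b; rw [← Finset.sum_mul, hcol b]
    simp_rw [this, ← Finset.mul_sum, hq]
  have inner : ∀ a, ∑ b, B a b * (p a - σ) * (q b - τ)
      = (∑ b, B a b * p a * q b) - τ * (Δ * p a) - σ * (∑ b, B a b * q b) + σ * τ * Δ := by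
    intro a
    have h2 : ∑ b, B a b * p a = Δ * p a := by rw [← Finset.sum_mul, hrow a]
    calc ∑ b, B a b * (p a - σ) * (q b - τ)
        = ∑ b, (B a b * p a * q b - τ * (B a b * p a) - σ * (B a b * q b) + σ * τ * B a b) :=
          Finset.sum_congr rfl fun b _ => by ring
      _ = (∑ b, B a b * p a * q b) - τ * (∑ b, B a b * p a) - σ * (∑ b, B a b * q b)
            + σ * τ * (∑ b, B a b) := by
          rw [Finset.sum_add_distrib, Finset.sum_sub_distrib, Finset.sum_sub_distrib,
            ← Finset.mul_sum, ← Finset.mul_sum, ← Finset.mul_sum]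
      _ = _ := by rw [h2, hrow a]
  simp_rw [inner]
  rw [Finset.sum_add_distrib, Finset.sum_sub_distrib, Finset.sum_sub_distrib]
  simp_rw [← Finset.mul_sum]
  rw [hp, e3, Finset.sum_const, Finset.card_univ, Fintype.card_fin, nsmul_eq_mul]
  ring

private lemma aux_dot {n : ℕ} (G : SimpleGraph (Fin n ⊕ Fin n)) [DecidableRel G.Adj]
    (hbipL : ∀ a b : Fin n, ¬ G.Adj (Sum.inl a) (Sum.inl b))
    (hbipR : ∀ a b : Fin n, ¬ G.Adj (Sum.inr a) (Sum.inr b))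
    (f g : Fin n → ℝ) :
    (Sum.elim f g) ⬝ᵥ ((G.adjMatrix ℝ).mulVec (Sum.elim f g))
      = 2 * ∑ a, ∑ b, (if G.Adj (Sum.inl a) (Sum.inr b) then (1:ℝ) else 0) * f a * g b := by
  have hsym : ∀ a b : Fin n, G.Adj (Sum.inr b) (Sum.inl a) = G.Adj (Sum.inl a) (Sum.inr b) :=
    fun a b => propext (G.adj_comm _ _)
  simp only [dotProduct, mulVec, Fintype.sum_sum_type, Sum.elim_inl, Sum.elim_inr,
    SimpleGraph.adjMatrix_apply, hbipL, hbipR, hsym, if_false, zero_mul,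
    Finset.sum_const_zero, zero_add, add_zero]
  rw [two_mul]
  congr 1
  · simp_rw [Finset.mul_sum]
    exact Finset.sum_congr rfl fun a _ => Finset.sum_congr rfl fun b _ => by ring
  · simp_rw [Finset.mul_sum]
    rw [Finset.sum_comm]
    exact Finset.sum_congr rfl fun a _ => Finset.sum_congr rfl fun b _ => by ring

private lemma aux_deg {V : Type*} [Fintype V] {Δ : ℕ} (G : SimpleGraph V) [DecidableRel G.Adj]
    (hreg : ∀ v, G.degree v = Δ) (w : V) :
    ∑ v, (if G.Adj w v then (1:ℝ) else 0) = Δ := by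
  rw [Finset.sum_boole]
  have : Finset.univ.filter (fun v => G.Adj w v) = G.neighborFinset w := by
    rw [SimpleGraph.neighborFinset_eq_filter]
  rw [this, show (G.neighborFinset w).card = G.degree w from rfl, hreg w]

private lemma aux_e2 {n : ℕ} (B : Fin n → Fin n → ℝ) (Δ : ℝ)
    (hrow : ∀ a, ∑ b, B a b = Δ) (p : Fin n → ℝ) (σ : ℝ) (hp : ∑ a, p a = σ * n) :
    ∑ a, ∑ b, B a b * p a = Δ * (σ * n) := by
  have : ∀ a, ∑ b, B a b * p a = Δ * p a := by
    intro a; rw [← Finset.sum_mul, hrow a]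
  simp_rw [this, ← Finset.mul_sum, hp]

private lemma aux_e3 {n : ℕ} (B : Fin n → Fin n → ℝ) (Δ : ℝ)
    (hcol : ∀ b, ∑ a, B a b = Δ) (q : Fin n → ℝ) (τ : ℝ) (hq : ∑ b, q b = τ * n) :
    ∑ a, ∑ b, B a b * q b = Δ * (τ * n) := by
  rw [Finset.sum_comm]
  have : ∀ b, ∑ a, B a b * q b = Δ * q b := by
    intro b; rw [← Finset.sum_mul, hcol b]
  simp_rw [this, ← Finset.mul_sum, hq]

private lemma aux_sq {n : ℕ} (S : Finset (Fin n)) (σ : ℝ) (hσ : (S.card : ℝ) = σ * n) :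
    ∑ a, ((if a ∈ S then (1:ℝ) else 0) - σ) ^ 2 = σ * (1 - σ) * n := by
  have h1 : ∑ a : Fin n, ((if a ∈ S then (1:ℝ) else 0) - σ) ^ 2
      = ∑ a : Fin n, ((if a ∈ S then (1:ℝ) else 0) * (1 - 2 * σ) + σ ^ 2) := by
    refine Finset.sum_congr rfl fun a _ => ?_
    by_cases h : a ∈ S <;> simp [h] <;> ring
  have h2 : ∑ a : Fin n, (if a ∈ S then (1:ℝ) else 0) = (S.card : ℝ) := by
    have h3 : Finset.univ.filter (fun a => a ∈ S) = S := by ext a; simp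
    rw [Finset.sum_boole, h3]
  rw [h1, Finset.sum_add_distrib, ← Finset.sum_mul, h2, hσ, Finset.sum_const,
    Finset.card_univ, Fintype.card_fin, nsmul_eq_mul]
  ring

/-- Degree-sum bound for induced subgraphs of bipartite expanders.
`G` is a bipartite `Δ`-regular connected graph on parts `V' = Fin n` (via `Sum.inl`) and
`V'' = Fin n` (via `Sum.inr`), `n > 1`; `γ * Δ` is the second largest eigenvalue of the
adjacency matrix (Courant–Fischer characterization over the orthogonal complement of the
all-one vector).  For `S ⊆ V'` and `T ⊆ V''` with `|S| = σn`, `|T| = τn`, `σ + τ > 0`,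
the sum of the degrees in the subgraph induced by `S ∪ T` is at most
`2((1−γ)στ + γ√(στ))Δn`. -/
theorem stmt_1 (n Δ : ℕ) (hn : 1 < n) (hΔ : 0 < Δ)
    (G : SimpleGraph (Fin n ⊕ Fin n)) [DecidableRel G.Adj]
    (hbipL : ∀ a b : Fin n, ¬ G.Adj (Sum.inl a) (Sum.inl b))
    (hbipR : ∀ a b : Fin n, ¬ G.Adj (Sum.inr a) (Sum.inr b))
    (hreg : ∀ v, G.degree v = Δ)
    (hconn : G.Connected)
    (γ : ℝ)
    (hγ : IsGreatest {ρ : ℝ | ∃ x : (Fin n ⊕ Fin n) → ℝ, x ≠ 0 ∧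
        (x ⬝ᵥ (fun _ => 1)) = 0 ∧
        x ⬝ᵥ ((G.adjMatrix ℝ).mulVec x) = ρ * (x ⬝ᵥ x)} (γ * Δ))
    (S T : Finset (Fin n)) (σ τ : ℝ)
    (hσ : (S.card : ℝ) = σ * n) (hτ : (T.card : ℝ) = τ * n)
    (hστ : 0 < σ + τ)
    (U : Finset (Fin n ⊕ Fin n)) (hU : U = S.image Sum.inl ∪ T.image Sum.inr) :
    (∑ w ∈ U, ((U.filter (fun v => G.Adj w v)).card : ℝ))
      ≤ 2 * ((1 - γ) * σ * τ + γ * Real.sqrt (σ * τ)) * Δ * n := by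
  classical
  -- basic positivity facts
  have hn0 : (0:ℝ) < n := by exact_mod_cast Nat.lt_of_lt_of_le Nat.zero_lt_one hn.le
  have hΔ0 : (0:ℝ) < Δ := by exact_mod_cast hΔ
  -- bounds on σ and τ
  have hσ0 : 0 ≤ σ := by nlinarith [Nat.cast_nonneg (α := ℝ) S.card, hσ]
  have hτ0 : 0 ≤ τ := by nlinarith [Nat.cast_nonneg (α := ℝ) T.card, hτ]
  have hScard : (S.card : ℝ) ≤ n := by exact_mod_cast (by simpa using Finset.card_le_univ S)
  have hTcard : (T.card : ℝ) ≤ n := by exact_mod_cast (by simpa using Finset.card_le_univ T)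
  have hσ1 : σ ≤ 1 := by nlinarith
  have hτ1 : τ ≤ 1 := by nlinarith
  -- γ is nonnegative
  have hγ0 : 0 ≤ γ := by
    set u0 : Fin n := ⟨0, by omega⟩ with hu0
    set u1 : Fin n := ⟨1, by omega⟩ with hu1
    have h01 : u0 ≠ u1 := by
      intro h
      have := congrArg Fin.val h
      simp [hu0, hu1] at this
    have h0mem : (0:ℝ) ∈ {ρ : ℝ | ∃ x : (Fin n ⊕ Fin n) → ℝ, x ≠ 0 ∧
        (x ⬝ᵥ (fun _ => 1)) = 0 ∧
        x ⬝ᵥ ((G.adjMatrix ℝ).mulVec x) = ρ * (x ⬝ᵥ x)} := by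
      refine ⟨Sum.elim (fun a => (if a = u0 then (1:ℝ) else 0)
          - (if a = u1 then 1 else 0)) (fun _ => 0), ?_, ?_, ?_⟩
      · intro h
        have := congrFun h (Sum.inl u0)
        simp [h01] at this
      · simp [dotProduct, Fintype.sum_sum_type, Finset.sum_sub_distrib]
      · rw [zero_mul, aux_dot G hbipL hbipR]
        simp
    have := hγ.2 h0mem
    nlinarith
  -- notation
  set B : Fin n → Fin n → ℝ := fun a b => if G.Adj (Sum.inl a) (Sum.inr b) then 1 else 0 with hB
  set p : Fin n → ℝ := fun a => if a ∈ S then 1 else 0 with hp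
  set q : Fin n → ℝ := fun b => if b ∈ T then 1 else 0 with hq
  set E : ℝ := ∑ a, ∑ b, B a b * p a * q b with hE
  have hsym : ∀ a b : Fin n, G.Adj (Sum.inr b) (Sum.inl a) = G.Adj (Sum.inl a) (Sum.inr b) :=
    fun a b => propext (G.adj_comm _ _)
  -- row and column sums of B
  have hrow : ∀ a, ∑ b, B a b = (Δ:ℝ) := by
    intro a
    have h := aux_deg G hreg (Sum.inl a)
    rw [Fintype.sum_sum_type] at h
    simpa [hB, hbipL] using h
  have hcol : ∀ b, ∑ a, B a b = (Δ:ℝ) := by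
    intro b
    have h := aux_deg G hreg (Sum.inr b)
    rw [Fintype.sum_sum_type] at h
    simpa [hB, hbipR, hsym] using h
  -- sums of indicators
  have hpsum : ∑ a, p a = σ * n := by
    have h3 : Finset.univ.filter (fun a => a ∈ S) = S := by ext a; simp
    rw [hp]
    rw [Finset.sum_boole, h3, hσ]
  have hqsum : ∑ b, q b = τ * n := by
    have h3 : Finset.univ.filter (fun b => b ∈ T) = T := by ext b; simp
    rw [hq]
    rw [Finset.sum_boole, h3, hτ]
  -- the LHS equals 2 * E
  have hBapp : ∀ a b, (if G.Adj (Sum.inl a) (Sum.inr b) then (1:ℝ) else 0) = B a b :=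
    fun _ _ => rfl
  have hpapp : ∀ i, p i = if i ∈ S then (1:ℝ) else 0 := fun _ => rfl
  have hqapp : ∀ j, q j = if j ∈ T then (1:ℝ) else 0 := fun _ => rfl
  have hLHS : (∑ w ∈ U, ((U.filter (fun v => G.Adj w v)).card : ℝ)) = 2 * E := by
    have hxU : ∀ w, Sum.elim p q w = if w ∈ U then (1:ℝ) else 0 := by
      rintro (i | j) <;> simp [hpapp, hqapp, hU]
    have inner : ∀ w, (∑ v, (if G.Adj w v then (1:ℝ) else 0) * (if v ∈ U then 1 else 0))
        = ((U.filter (fun v => G.Adj w v)).card : ℝ) := by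
      intro w
      calc ∑ v, (if G.Adj w v then (1:ℝ) else 0) * (if v ∈ U then 1 else 0)
          = ∑ v, (if v ∈ U then (if G.Adj w v then (1:ℝ) else 0) else 0) := by
            refine Finset.sum_congr rfl fun v _ => ?_
            by_cases h1 : v ∈ U <;> by_cases h2 : G.Adj w v <;> simp [h1, h2]
        _ = ∑ v ∈ U, (if G.Adj w v then (1:ℝ) else 0) := by
            rw [Finset.sum_ite_mem, Finset.univ_inter]
        _ = _ := by rw [Finset.sum_boole]
    have step1 : (Sum.elim p q) ⬝ᵥ ((G.adjMatrix ℝ).mulVec (Sum.elim p q))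
        = ∑ w ∈ U, ((U.filter (fun v => G.Adj w v)).card : ℝ) := by
      calc (Sum.elim p q) ⬝ᵥ ((G.adjMatrix ℝ).mulVec (Sum.elim p q))
          = ∑ w, (if w ∈ U then (1:ℝ) else 0)
              * (∑ v, (if G.Adj w v then (1:ℝ) else 0) * (if v ∈ U then 1 else 0)) := by
            simp only [dotProduct, mulVec, SimpleGraph.adjMatrix_apply]
            simp_rw [hxU]
        _ = ∑ w, (if w ∈ U then ((U.filter (fun v => G.Adj w v)).card : ℝ) else 0) := by
            refine Finset.sum_congr rfl fun w _ => ?_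
            rw [inner w]
            by_cases h : w ∈ U <;> simp [h]
        _ = _ := by rw [Finset.sum_ite_mem, Finset.univ_inter]
    rw [← step1, aux_dot G hbipL hbipR p q]
  rw [hLHS]
  -- abbreviations for the quadratic quantities
  set a : ℝ := σ * (1 - σ) with ha
  set b : ℝ := τ * (1 - τ) with hb
  have ha0 : 0 ≤ a := mul_nonneg hσ0 (by linarith)
  have hb0 : 0 ≤ b := mul_nonneg hτ0 (by linarith)
  have hab : 0 ≤ σ * τ := mul_nonneg hσ0 hτ0
  have hsqrtστ : σ * τ ≤ Real.sqrt (σ * τ) := by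
    have hστ1 : σ * τ ≤ 1 := mul_le_one₀ hσ1 hτ0 hτ1
    have h1 : (σ*τ) * (σ*τ) ≤ σ*τ := by nlinarith
    calc σ*τ = Real.sqrt ((σ*τ) * (σ*τ)) := (Real.sqrt_mul_self hab).symm
      _ ≤ Real.sqrt (σ*τ) := Real.sqrt_le_sqrt h1
  -- key claim: E ≤ σ τ Δ n + γ Δ n (√(στ) − στ)
  have hmain : E ≤ σ * τ * Δ * n + γ * Δ * n * (Real.sqrt (σ * τ) - σ * τ) := by
    by_cases hdeg : a = 0 ∨ b = 0
    · -- degenerate case : E = σ τ Δ n exactly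
      have hEeq : E = σ * τ * Δ * n := by
        rcases hdeg with h | h <;> rw [mul_eq_zero] at h
        · rcases h with h | h
          · -- σ = 0 : S is empty
            have hS0 : S = ∅ := by
              rw [← Finset.card_eq_zero]
              have : (S.card : ℝ) = 0 := by rw [hσ, h]; ring
              exact_mod_cast this
            have : ∀ i, p i = 0 := by intro i; rw [hpapp, hS0]; simp
            rw [hE]
            simp [this, h]
          · -- σ = 1 : S is everything
            have hσ1' : σ = 1 := by linarith
            have hS1 : S = Finset.univ := by
              apply Finset.eq_univ_of_card
              have h5 : (S.card : ℝ) = (n : ℝ) := by rw [hσ, hσ1']; ring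
              have h6 : S.card = n := by exact_mod_cast h5
              rw [h6, Fintype.card_fin]
            have hp1 : ∀ i, p i = 1 := by intro i; rw [hpapp, hS1]; simp
            rw [hE]
            calc ∑ a', ∑ b', B a' b' * p a' * q b'
                = ∑ a', ∑ b', B a' b' * q b' := by
                  refine Finset.sum_congr rfl fun a' _ => Finset.sum_congr rfl fun b' _ => ?_
                  rw [hp1]; ring
              _ = (Δ:ℝ) * (τ * n) := aux_e3 B Δ hcol q τ hqsum
              _ = σ * τ * Δ * n := by rw [hσ1']; ring
        · rcases h with h | h
          · -- τ = 0 : T is empty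
            have hT0 : T = ∅ := by
              rw [← Finset.card_eq_zero]
              have : (T.card : ℝ) = 0 := by rw [hτ, h]; ring
              exact_mod_cast this
            have : ∀ j, q j = 0 := by intro j; rw [hqapp, hT0]; simp
            rw [hE]
            simp [this, h]
          · -- τ = 1 : T is everything
            have hτ1' : τ = 1 := by linarith
            have hT1 : T = Finset.univ := by
              apply Finset.eq_univ_of_card
              have h5 : (T.card : ℝ) = (n : ℝ) := by rw [hτ, hτ1']; ring
              have h6 : T.card = n := by exact_mod_cast h5
              rw [h6, Fintype.card_fin]
            have hq1 : ∀ j, q j = 1 := by intro j; rw [hqapp, hT1]; simp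
            rw [hE]
            calc ∑ a', ∑ b', B a' b' * p a' * q b'
                = ∑ a', ∑ b', B a' b' * p a' := by
                  refine Finset.sum_congr rfl fun a' _ => Finset.sum_congr rfl fun b' _ => ?_
                  rw [hq1]; ring
              _ = (Δ:ℝ) * (σ * n) := aux_e2 B Δ hrow p σ hpsum
              _ = σ * τ * Δ * n := by rw [hτ1']; ring
      have : 0 ≤ γ * Δ * n * (Real.sqrt (σ * τ) - σ * τ) := by
        apply mul_nonneg
        · positivity
        · linarith
      linarith [hEeq]
    · push_neg at hdeg
      have hapos : 0 < a := lt_of_le_of_ne ha0 (Ne.symm hdeg.1)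
      have hbpos : 0 < b := lt_of_le_of_ne hb0 (Ne.symm hdeg.2)
      set α : ℝ := Real.sqrt (Real.sqrt (b / a)) with hαdef
      set β : ℝ := Real.sqrt (Real.sqrt (a / b)) with hβdef
      have hαβ : α * β = 1 := by
        rw [hαdef, hβdef, ← Real.sqrt_mul (Real.sqrt_nonneg _),
          ← Real.sqrt_mul (by positivity)]
        rw [show b / a * (a / b) = 1 by field_simp]
        simp
      have hα2 : α ^ 2 = Real.sqrt (b / a) := Real.sq_sqrt (Real.sqrt_nonneg _)
      have hβ2 : β ^ 2 = Real.sqrt (a / b) := Real.sq_sqrt (Real.sqrt_nonneg _)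
      have hα2a : α ^ 2 * a = Real.sqrt (a * b) := by
        have h7 : Real.sqrt (b / a) * Real.sqrt (a ^ 2) = Real.sqrt (a * b) := by
          rw [← Real.sqrt_mul (by positivity)]
          congr 1
          field_simp
        rw [Real.sqrt_sq hapos.le] at h7
        rw [hα2, h7]
      have hβ2b : β ^ 2 * b = Real.sqrt (a * b) := by
        have h7 : Real.sqrt (a / b) * Real.sqrt (b ^ 2) = Real.sqrt (a * b) := by
          rw [← Real.sqrt_mul (by positivity)]
          congr 1
          field_simp
        rw [Real.sqrt_sq hbpos.le] at h7
        rw [hβ2, h7]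
      have hsabpos : 0 < Real.sqrt (a * b) := Real.sqrt_pos.mpr (mul_pos hapos hbpos)
      set x : (Fin n ⊕ Fin n) → ℝ :=
        Sum.elim (fun i => α * (p i - σ)) (fun j => β * (q j - τ)) with hxdef
      -- x is orthogonal to the all-ones vector
      have hones : (x ⬝ᵥ (fun _ => 1)) = 0 := by
        have h1 : ∑ i, α * (p i - σ) = 0 := by
          rw [← Finset.mul_sum, Finset.sum_sub_distrib, hpsum, Finset.sum_const,
            Finset.card_univ, Fintype.card_fin, nsmul_eq_mul]
          ring
        have h2 : ∑ j, β * (q j - τ) = 0 := by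
          rw [← Finset.mul_sum, Finset.sum_sub_distrib, hqsum, Finset.sum_const,
            Finset.card_univ, Fintype.card_fin, nsmul_eq_mul]
          ring
        simp only [hxdef, dotProduct, Fintype.sum_sum_type, Sum.elim_inl, Sum.elim_inr,
          mul_one]
        rw [h1, h2]
        ring
      -- the Rayleigh numerator
      have hxAx : x ⬝ᵥ ((G.adjMatrix ℝ).mulVec x) = 2 * (E - σ * τ * Δ * n) := by
        rw [hxdef, aux_dot G hbipL hbipR]
        have h8 : ∑ a', ∑ b', (if G.Adj (Sum.inl a') (Sum.inr b') then (1:ℝ) else 0)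
              * (α * (p a' - σ)) * (β * (q b' - τ))
            = (α * β) * ∑ a', ∑ b', B a' b' * (p a' - σ) * (q b' - τ) := by
          rw [Finset.mul_sum]
          refine Finset.sum_congr rfl fun a' _ => ?_
          rw [Finset.mul_sum]
          refine Finset.sum_congr rfl fun b' _ => ?_
          rw [← hBapp]
          ring
        rw [h8, aux_expand B (Δ:ℝ) hrow hcol p q σ τ hpsum hqsum, hαβ, ← hE]
        ring
      -- the Rayleigh denominator
      have hxx : x ⬝ᵥ x = 2 * (Real.sqrt (a * b) * n) := by
        have h1 : ∑ i, (α * (p i - σ)) * (α * (p i - σ)) = α ^ 2 * (σ * (1 - σ) * n) := by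
          have : ∀ i, (α * (p i - σ)) * (α * (p i - σ))
              = α ^ 2 * ((if i ∈ S then (1:ℝ) else 0) - σ) ^ 2 := by
            intro i; rw [hpapp]; ring
          simp_rw [this, ← Finset.mul_sum, aux_sq S σ hσ]
        have h2 : ∑ j, (β * (q j - τ)) * (β * (q j - τ)) = β ^ 2 * (τ * (1 - τ) * n) := by
          have : ∀ j, (β * (q j - τ)) * (β * (q j - τ))
              = β ^ 2 * ((if j ∈ T then (1:ℝ) else 0) - τ) ^ 2 := by
            intro j; rw [hqapp]; ring
          simp_rw [this, ← Finset.mul_sum, aux_sq T τ hτ]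
        simp only [hxdef, dotProduct, Fintype.sum_sum_type, Sum.elim_inl, Sum.elim_inr]
        rw [h1, h2, ← ha, ← hb]
        rw [show α ^ 2 * (a * (n:ℝ)) = α ^ 2 * a * n by ring, hα2a]
        rw [show β ^ 2 * (b * (n:ℝ)) = β ^ 2 * b * n by ring, hβ2b]
        ring
      have hxxpos : 0 < x ⬝ᵥ x := by rw [hxx]; positivity
      have hxne : x ≠ 0 := by
        intro h
        rw [h] at hxxpos
        simp [dotProduct] at hxxpos
      -- apply the eigenvalue bound
      have hmem : (x ⬝ᵥ ((G.adjMatrix ℝ).mulVec x)) / (x ⬝ᵥ x)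
          ∈ {ρ : ℝ | ∃ y : (Fin n ⊕ Fin n) → ℝ, y ≠ 0 ∧
            (y ⬝ᵥ (fun _ => 1)) = 0 ∧
            y ⬝ᵥ ((G.adjMatrix ℝ).mulVec y) = ρ * (y ⬝ᵥ y)} :=
        ⟨x, hxne, hones, (div_mul_cancel₀ _ (ne_of_gt hxxpos)).symm⟩
      have hρ := hγ.2 hmem
      have h6 : x ⬝ᵥ ((G.adjMatrix ℝ).mulVec x) ≤ (γ * Δ) * (x ⬝ᵥ x) := by
        have h9 := mul_le_mul_of_nonneg_right hρ hxxpos.le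
        rwa [div_mul_cancel₀ _ (ne_of_gt hxxpos)] at h9
      rw [hxAx, hxx] at h6
      -- the key square-root inequality
      have hk : Real.sqrt (a * b) ≤ Real.sqrt (σ * τ) - σ * τ := by
        rw [ha, hb]
        exact key_sqrt hσ0 hσ1 hτ0 hτ1
      have h10 : γ * Δ * (Real.sqrt (a * b) * n) ≤ γ * Δ * ((Real.sqrt (σ * τ) - σ * τ) * n) := by
        apply mul_le_mul_of_nonneg_left _ (by positivity)
        apply mul_le_mul_of_nonneg_right hk hn0.le
      linarith [h6, h10]
  calc (2:ℝ) * E ≤ 2 * (σ * τ * Δ * n + γ * Δ * n * (Real.sqrt (σ * τ) - σ * τ)) := by linarith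
    _ = 2 * ((1 - γ) * σ * τ + γ * Real.sqrt (σ * τ)) * Δ * n := by ring
end

section
/- Let G = (V' : V'', E) be a bipartite Δ-regular connected graph with parts of equal size n > 1 whose second-eigenvalue ratio γ = γ_G satisfies γ > 0. Let χ : V' ∪ V'' → [0,1] be a function whose restriction to V'' is not identically zero, and set σ = (1/n) Σ_{u ∈ V'} χ(u) and τ = (1/n) Σ_{v ∈ V''} χ(v). Suppose δ is a real number such that for every v ∈ V'', if χ(v) > 0 then Σ_{u ∈ N(v)} χ(u) ≥ δΔ/2. Then √(σ/τ) ≥ ((δ/2) − (1−γ)σ) / γ. -/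
open Matrix BigOperators

private lemma symdot_aux {V : Type*} [Fintype V] (G : SimpleGraph V) [DecidableRel G.Adj]
    (x y : V → ℝ) :
    x ⬝ᵥ ((G.adjMatrix ℝ) *ᵥ y) = y ⬝ᵥ ((G.adjMatrix ℝ) *ᵥ x) := by
  rw [Matrix.dotProduct_mulVec, ← Matrix.mulVec_transpose, SimpleGraph.transpose_adjMatrix,
    dotProduct_comm]

private lemma sqrt_aux (σ τ : ℝ) (hσ0 : 0 < σ) (hσ1 : σ < 1) (hτ0 : 0 < τ) (hτ1 : τ < 1) :
    Real.sqrt (σ*(1-σ)) * Real.sqrt (τ*(1-τ)) ≤ Real.sqrt (σ*τ) - σ*τ := by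
  set u := Real.sqrt (σ*τ) with hu
  have hu2 : u^2 = σ*τ := Real.sq_sqrt (by positivity)
  have hu0 : 0 ≤ u := Real.sqrt_nonneg _
  have hu1 : u ≤ 1 := by nlinarith
  have h2u : 2*u ≤ σ + τ := by
    have : u = Real.sqrt σ * Real.sqrt τ := by rw [hu, Real.sqrt_mul hσ0.le]
    nlinarith [sq_nonneg (Real.sqrt σ - Real.sqrt τ), Real.sq_sqrt hσ0.le, Real.sq_sqrt hτ0.le]
  have key : σ*(1-σ) * (τ*(1-τ)) ≤ (u*(1-u))^2 := by nlinarith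
  calc Real.sqrt (σ*(1-σ)) * Real.sqrt (τ*(1-τ))
      = Real.sqrt (σ*(1-σ) * (τ*(1-τ))) := (Real.sqrt_mul (by nlinarith) _).symm
    _ ≤ Real.sqrt ((u*(1-u))^2) := Real.sqrt_le_sqrt key
    _ = u*(1-u) := Real.sqrt_sq (by nlinarith)
    _ = u - σ*τ := by rw [mul_sub, mul_one, ← hu2]; ring

set_option maxHeartbeats 2000000 in
private lemma stmt_3_aux (n Δ : ℕ) (hn : 1 < n) (hΔ : 0 < Δ)
    (G : SimpleGraph (Fin n ⊕ Fin n)) [DecidableRel G.Adj]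
    (hbipL : ∀ a b : Fin n, ¬ G.Adj (Sum.inl a) (Sum.inl b))
    (hbipR : ∀ a b : Fin n, ¬ G.Adj (Sum.inr a) (Sum.inr b))
    (hreg : ∀ v, G.degree v = Δ)
    (hconn : G.Connected)
    (γ : ℝ) (hγpos : 0 < γ)
    (hγ : IsGreatest {ρ : ℝ | ∃ x : (Fin n ⊕ Fin n) → ℝ, x ≠ 0 ∧
        (x ⬝ᵥ (fun _ => 1)) = 0 ∧
        x ⬝ᵥ ((G.adjMatrix ℝ).mulVec x) = ρ * (x ⬝ᵥ x)} (γ * Δ))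
    (χ : (Fin n ⊕ Fin n) → ℝ)
    (hχ : ∀ v, χ v ∈ Set.Icc (0 : ℝ) 1)
    (hχne : ∃ v : Fin n, χ (Sum.inr v) ≠ 0)
    (σ τ : ℝ)
    (hσ : σ = (1 / (n : ℝ)) * ∑ u : Fin n, χ (Sum.inl u))
    (hτ : τ = (1 / (n : ℝ)) * ∑ v : Fin n, χ (Sum.inr v))
    (δ : ℝ)
    (hδ : ∀ v : Fin n, 0 < χ (Sum.inr v) →
        δ * Δ / 2 ≤ ∑ u ∈ G.neighborFinset (Sum.inr v), χ u) :
    (δ / 2 - (1 - γ) * σ) / γ ≤ Real.sqrt (σ / τ) := by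
  classical
  have hn0 : (0:ℝ) < n := Nat.cast_pos.mpr (by omega)
  have hΔ0 : (0:ℝ) < Δ := by exact_mod_cast hΔ
  have hχ0 : ∀ v, 0 ≤ χ v := fun v => (hχ v).1
  have hχ1 : ∀ v, χ v ≤ 1 := fun v => (hχ v).2
  set L := ∑ u : Fin n, χ (Sum.inl u) with hLdef
  set R := ∑ v : Fin n, χ (Sum.inr v) with hRdef
  have hL : L = n * σ := by rw [hσ]; field_simp
  have hR : R = n * τ := by rw [hτ]; field_simp
  have hL0 : 0 ≤ L := Finset.sum_nonneg fun a _ => hχ0 _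
  have hL1 : L ≤ n := by
    calc L ≤ ∑ _u : Fin n, (1:ℝ) := Finset.sum_le_sum fun a _ => hχ1 _
    _ = n := by simp
  have hR1 : R ≤ n := by
    calc R ≤ ∑ _v : Fin n, (1:ℝ) := Finset.sum_le_sum fun a _ => hχ1 _
    _ = n := by simp
  have hRpos : 0 < R := by
    obtain ⟨v0, hv0⟩ := hχne
    exact Finset.sum_pos' (fun v _ => hχ0 _) ⟨v0, Finset.mem_univ _, lt_of_le_of_ne (hχ0 _) (Ne.symm hv0)⟩
  have hσ0 : 0 ≤ σ := by nlinarith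
  have hσle1 : σ ≤ 1 := by nlinarith
  have hτpos : 0 < τ := by nlinarith
  have hτle1 : τ ≤ 1 := by nlinarith
  have hσsqrt : σ ≤ Real.sqrt (σ / τ) := by
    rcases eq_or_lt_of_le hσ0 with h | h
    · rw [← h]; exact Real.sqrt_nonneg _
    · have h2 : σ^2 ≤ σ/τ := by rw [le_div_iff₀ hτpos]; nlinarith
      calc σ = Real.sqrt (σ^2) := (Real.sqrt_sq hσ0).symm
        _ ≤ Real.sqrt (σ/τ) := Real.sqrt_le_sqrt h2
  by_cases hec : δ / 2 ≤ σ
  · rw [div_le_iff₀ hγpos]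
    have := mul_le_mul_of_nonneg_left hσsqrt hγpos.le
    nlinarith

  push_neg at hec
  -- main case : σ < δ/2
  set S : Fin n → ℝ := fun b => ∑ u ∈ G.neighborFinset (Sum.inr b), χ u with hSdef
  have hcard : ∀ v, (G.neighborFinset v).card = Δ := fun v => by
    rw [SimpleGraph.card_neighborFinset_eq_degree, hreg]
  obtain ⟨v0, hv0ne⟩ := hχne
  have hv0 : 0 < χ (Sum.inr v0) := lt_of_le_of_ne (hχ0 _) (Ne.symm hv0ne)
  have hSle : ∀ b, S b ≤ Δ := by
    intro b
    calc S b ≤ ∑ _u ∈ G.neighborFinset (Sum.inr b), (1:ℝ) :=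
          Finset.sum_le_sum fun u _ => hχ1 u
      _ = Δ := by rw [Finset.sum_const, hcard, nsmul_eq_mul, mul_one]
  have hδ2 : δ / 2 ≤ 1 := by
    have h1 : δ * Δ / 2 ≤ S v0 := hδ v0 hv0
    have h2 := hSle v0
    have h3 : (δ / 2) * Δ ≤ 1 * Δ := by linarith
    exact le_of_mul_le_mul_right h3 hΔ0
  have hσlt1 : σ < 1 := lt_of_lt_of_le hec hδ2
  have hσpos : 0 < σ := by
    rcases eq_or_lt_of_le hσ0 with h | h
    · exfalso
      have hLz : L = 0 := by rw [hL, ← h]; ring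
      have hall : ∀ a : Fin n, χ (Sum.inl a) = 0 := fun a =>
        (Finset.sum_eq_zero_iff_of_nonneg (fun a _ => hχ0 (Sum.inl a))).1 hLz a
          (Finset.mem_univ a)
      have hS0 : S v0 = 0 := Finset.sum_eq_zero fun u hu => by
        cases u with
        | inl a => exact hall a
        | inr c => exact absurd ((G.mem_neighborFinset _ _).1 hu) (hbipR v0 c)
      have h3 : δ * Δ / 2 ≤ S v0 := hδ v0 hv0
      rw [hS0] at h3
      have hδpos : 0 < δ := by linarith
      have := mul_pos hδpos hΔ0
      linarith
    · exact h
  set A := G.adjMatrix ℝ with hA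
  -- handshake: ∑ b, S b = Δ * L
  set p1 : (Fin n ⊕ Fin n) → ℝ := Sum.elim (fun a => χ (Sum.inl a)) (fun _ => 0) with hp1
  set q1 : (Fin n ⊕ Fin n) → ℝ := Sum.elim (fun _ => 0) (fun _ => 1) with hq1
  have e1 : q1 ⬝ᵥ (A *ᵥ p1) = ∑ b, S b := by
    simp only [hA, dotProduct, SimpleGraph.adjMatrix_mulVec_apply, Fintype.sum_sum_type,
      hq1, Sum.elim_inl, Sum.elim_inr, zero_mul, one_mul, Finset.sum_const_zero, zero_add]
    refine Finset.sum_congr rfl fun b _ => ?_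
    simp only [hSdef]
    refine Finset.sum_congr rfl fun u hu => ?_
    cases u with
    | inl a => simp [hp1]
    | inr c => exact absurd ((G.mem_neighborFinset _ _).1 hu) (hbipR b c)
  have e2 : p1 ⬝ᵥ (A *ᵥ q1) = L * Δ := by
    simp only [hA, dotProduct, SimpleGraph.adjMatrix_mulVec_apply, Fintype.sum_sum_type,
      hp1, Sum.elim_inl, Sum.elim_inr, zero_mul, Finset.sum_const_zero, add_zero]
    have hin : ∀ a : Fin n, ∑ u ∈ G.neighborFinset (Sum.inl a), q1 u = (Δ:ℝ) := by
      intro a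
      have : ∀ u ∈ G.neighborFinset (Sum.inl a), q1 u = 1 := by
        intro u hu
        cases u with
        | inl c => exact absurd ((G.mem_neighborFinset _ _).1 hu) (hbipL a c)
        | inr b => simp [hq1]
      rw [Finset.sum_congr rfl this, Finset.sum_const, hcard, nsmul_eq_mul, mul_one]
    calc ∑ a : Fin n, χ (Sum.inl a) * ∑ u ∈ G.neighborFinset (Sum.inl a), q1 u
        = ∑ a : Fin n, χ (Sum.inl a) * Δ := Finset.sum_congr rfl fun a _ => by rw [hin a]
      _ = L * Δ := by rw [← Finset.sum_mul]
  have H : ∑ b, S b = Δ * L := by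
    rw [← e1, symdot_aux, e2, mul_comm]
  have hτlt1 : τ < 1 := by
    rcases lt_or_eq_of_le hτle1 with h | h
    · exact h
    · exfalso
      have hRn : R = n := by rw [hR, h, mul_one]
      have hsum0 : ∑ b : Fin n, (1 - χ (Sum.inr b)) = 0 := by
        rw [Finset.sum_sub_distrib, Finset.sum_const, Finset.card_univ, Fintype.card_fin,
          nsmul_eq_mul, mul_one, ← hRdef, hRn, sub_self]
      have hallR : ∀ b : Fin n, χ (Sum.inr b) = 1 := by
        intro b
        have := (Finset.sum_eq_zero_iff_of_nonneg
          (fun b _ => by linarith [hχ1 (Sum.inr b)])).1 hsum0 b (Finset.mem_univ b)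
        linarith
      have hsums : ∀ b : Fin n, δ * Δ / 2 ≤ S b := fun b => hδ b (by rw [hallR b]; norm_num)
      have hge : (n:ℝ) * (δ * Δ / 2) ≤ ∑ b, S b := by
        calc (n:ℝ) * (δ * Δ / 2) = ∑ _b : Fin n, (δ * Δ / 2) := by
              rw [Finset.sum_const, Finset.card_univ, Fintype.card_fin, nsmul_eq_mul]
          _ ≤ ∑ b, S b := Finset.sum_le_sum fun b _ => hsums b
      rw [H, hL] at hge
      have h2 : ((n:ℝ) * Δ) * (δ / 2) ≤ ((n:ℝ) * Δ) * σ := by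
        calc ((n:ℝ) * Δ) * (δ / 2) = n * (δ * Δ / 2) := by ring
          _ ≤ Δ * ((n:ℝ) * σ) := hge
          _ = ((n:ℝ) * Δ) * σ := by ring
      have h3 := le_of_mul_le_mul_left h2 (by positivity)
      linarith
  -- the test vector
  set a := Real.sqrt (σ * (1 - σ)) with hadef
  set b := Real.sqrt (τ * (1 - τ)) with hbdef
  have ha0 : 0 < a := Real.sqrt_pos.mpr (mul_pos hσpos (by linarith))
  have hb0 : 0 < b := Real.sqrt_pos.mpr (mul_pos hτpos (by linarith))
  have ha2 : a ^ 2 = σ * (1 - σ) := Real.sq_sqrt (le_of_lt (mul_pos hσpos (by linarith)))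
  have hb2 : b ^ 2 = τ * (1 - τ) := Real.sq_sqrt (le_of_lt (mul_pos hτpos (by linarith)))
  set s := a / b with hsdef
  have hspos : 0 < s := div_pos ha0 hb0
  have hs2 : s ^ 2 * (τ * (1 - τ)) = σ * (1 - σ) := by
    rw [hsdef, div_pow, ha2, hb2, div_mul_cancel₀ _ (ne_of_gt (mul_pos hτpos (by linarith : (0:ℝ) < 1 - τ)))]
  set p : (Fin n ⊕ Fin n) → ℝ := Sum.elim (fun u => χ (Sum.inl u) - σ) (fun _ => 0) with hpdef
  set q : (Fin n ⊕ Fin n) → ℝ := Sum.elim (fun _ => 0) (fun v => χ (Sum.inr v) - τ) with hqdef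
  set x : (Fin n ⊕ Fin n) → ℝ := fun v => p v + s * q v with hxdef
  have hBpp : p ⬝ᵥ (A *ᵥ p) = 0 := by
    simp only [hA, dotProduct, SimpleGraph.adjMatrix_mulVec_apply, Fintype.sum_sum_type,
      hpdef, Sum.elim_inl, Sum.elim_inr, zero_mul, Finset.sum_const_zero, add_zero]
    refine Finset.sum_eq_zero fun a' _ => ?_
    have : ∑ u ∈ G.neighborFinset (Sum.inl a'), Sum.elim (fun u => χ (Sum.inl u) - σ)
        (fun _ => (0:ℝ)) u = 0 := Finset.sum_eq_zero fun u hu => by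
      cases u with
      | inl c => exact absurd ((G.mem_neighborFinset _ _).1 hu) (hbipL a' c)
      | inr d => simp
    rw [this, mul_zero]
  have hBqq : q ⬝ᵥ (A *ᵥ q) = 0 := by
    simp only [hA, dotProduct, SimpleGraph.adjMatrix_mulVec_apply, Fintype.sum_sum_type,
      hqdef, Sum.elim_inl, Sum.elim_inr, zero_mul, Finset.sum_const_zero, zero_add]
    refine Finset.sum_eq_zero fun b' _ => ?_
    have : ∑ u ∈ G.neighborFinset (Sum.inr b'), Sum.elim (fun _ => (0:ℝ))
        (fun v => χ (Sum.inr v) - τ) u = 0 := Finset.sum_eq_zero fun u hu => by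
      cases u with
      | inl c => simp
      | inr d => exact absurd ((G.mem_neighborFinset _ _).1 hu) (hbipR b' d)
    rw [this, mul_zero]
  have hqAp : q ⬝ᵥ (A *ᵥ p) = (∑ b', χ (Sum.inr b') * S b') - Δ * σ * R := by
    have hinner : ∀ b' : Fin n, ∑ u ∈ G.neighborFinset (Sum.inr b'), p u = S b' - Δ * σ := by
      intro b'
      have h1 : ∑ u ∈ G.neighborFinset (Sum.inr b'), p u
          = ∑ u ∈ G.neighborFinset (Sum.inr b'), (χ u - σ) := by
        refine Finset.sum_congr rfl fun u hu => ?_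
        cases u with
        | inl c => simp [hpdef]
        | inr d => exact absurd ((G.mem_neighborFinset _ _).1 hu) (hbipR b' d)
      rw [h1, Finset.sum_sub_distrib, Finset.sum_const, hcard, nsmul_eq_mul]
    have hmain : q ⬝ᵥ (A *ᵥ p) = ∑ b', (χ (Sum.inr b') - τ) * (S b' - Δ * σ) := by
      simp only [hA, dotProduct, SimpleGraph.adjMatrix_mulVec_apply, Fintype.sum_sum_type,
        hqdef, Sum.elim_inl, Sum.elim_inr, zero_mul, Finset.sum_const_zero, zero_add]
      exact Finset.sum_congr rfl fun b' _ => by rw [hinner b']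
    rw [hmain]
    calc ∑ b', (χ (Sum.inr b') - τ) * (S b' - Δ * σ)
        = ∑ b', (χ (Sum.inr b') * S b' - τ * S b' - (Δ * σ) * χ (Sum.inr b') + τ * (Δ * σ)) :=
          Finset.sum_congr rfl fun b' _ => by ring
      _ = (∑ b', χ (Sum.inr b') * S b') - τ * (∑ b', S b') - (Δ * σ) * R + n * (τ * (Δ * σ)) := by
          rw [Finset.sum_add_distrib, Finset.sum_sub_distrib, Finset.sum_sub_distrib,
            ← Finset.mul_sum, ← Finset.mul_sum, Finset.sum_const, Finset.card_univ,
            Fintype.card_fin, nsmul_eq_mul, ← hRdef]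
      _ = (∑ b', χ (Sum.inr b') * S b') - Δ * σ * R := by rw [H, hL, hR]; ring
  have hx1 : x ⬝ᵥ (fun _ => (1:ℝ)) = 0 := by
    have hsumL : (∑ a' : Fin n, (χ (Sum.inl a') - σ)) = 0 := by
      rw [Finset.sum_sub_distrib, Finset.sum_const, Finset.card_univ, Fintype.card_fin,
        nsmul_eq_mul, ← hLdef, hL, sub_self]
    have hsumR : (∑ b' : Fin n, (χ (Sum.inr b') - τ)) = 0 := by
      rw [Finset.sum_sub_distrib, Finset.sum_const, Finset.card_univ, Fintype.card_fin,
        nsmul_eq_mul, ← hRdef, hR, sub_self]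
    calc x ⬝ᵥ (fun _ => (1:ℝ))
        = (∑ a' : Fin n, (χ (Sum.inl a') - σ)) + s * (∑ b' : Fin n, (χ (Sum.inr b') - τ)) := by
          simp only [dotProduct, Fintype.sum_sum_type, hxdef, hpdef, hqdef, Sum.elim_inl,
            Sum.elim_inr, mul_one, mul_zero, add_zero, zero_add, Finset.mul_sum]
      _ = 0 := by rw [hsumL, hsumR]; ring
  have hxAx : x ⬝ᵥ (A *ᵥ x) = 2 * s * (q ⬝ᵥ (A *ᵥ p)) := by
    have hxpq : x = p + s • q := funext fun v => by
      simp [hxdef, smul_eq_mul]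
    rw [hxpq, Matrix.mulVec_add, Matrix.mulVec_smul, add_dotProduct,
      smul_dotProduct, dotProduct_add, dotProduct_smul,
      dotProduct_add, dotProduct_smul, hBpp, hBqq, symdot_aux G p q]
    simp only [smul_eq_mul]
    ring
  have hxxle : x ⬝ᵥ x ≤ 2 * (n * (σ * (1 - σ))) := by
    have hxxval : x ⬝ᵥ x = (∑ a' : Fin n, (χ (Sum.inl a') - σ) ^ 2)
        + s ^ 2 * (∑ b' : Fin n, (χ (Sum.inr b') - τ) ^ 2) := by
      simp only [dotProduct, Fintype.sum_sum_type, hxdef, hpdef, hqdef, Sum.elim_inl,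
        Sum.elim_inr, mul_zero, add_zero, zero_add, Finset.mul_sum]
      congr 1
      · exact Finset.sum_congr rfl fun a' _ => by ring
      · exact Finset.sum_congr rfl fun b' _ => by ring
    have hbs1 : ∑ a' : Fin n, (χ (Sum.inl a') - σ) ^ 2 ≤ n * (σ * (1 - σ)) := by
      have h1 : ∑ a' : Fin n, (χ (Sum.inl a') - σ) ^ 2
          = (∑ a' : Fin n, χ (Sum.inl a') ^ 2) - 2 * σ * L + n * σ ^ 2 := by
        calc ∑ a' : Fin n, (χ (Sum.inl a') - σ) ^ 2
            = ∑ a' : Fin n, (χ (Sum.inl a') ^ 2 - 2 * σ * χ (Sum.inl a') + σ ^ 2) :=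
              Finset.sum_congr rfl fun a' _ => by ring
          _ = (∑ a' : Fin n, χ (Sum.inl a') ^ 2) - 2 * σ * L + n * σ ^ 2 := by
              rw [Finset.sum_add_distrib, Finset.sum_sub_distrib, ← Finset.mul_sum,
                Finset.sum_const, Finset.card_univ, Fintype.card_fin, nsmul_eq_mul, ← hLdef]
      have h2 : ∑ a' : Fin n, χ (Sum.inl a') ^ 2 ≤ L := by
        rw [hLdef]
        refine Finset.sum_le_sum fun a' _ => ?_
        calc χ (Sum.inl a') ^ 2 = χ (Sum.inl a') * χ (Sum.inl a') := sq (χ (Sum.inl a')) ▸ rfl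
          _ ≤ 1 * χ (Sum.inl a') := mul_le_mul_of_nonneg_right (hχ1 _) (hχ0 _)
          _ = χ (Sum.inl a') := one_mul _
      rw [hL] at h2
      rw [h1, hL]; linarith
    have hbs2 : ∑ b' : Fin n, (χ (Sum.inr b') - τ) ^ 2 ≤ n * (τ * (1 - τ)) := by
      have h1 : ∑ b' : Fin n, (χ (Sum.inr b') - τ) ^ 2
          = (∑ b' : Fin n, χ (Sum.inr b') ^ 2) - 2 * τ * R + n * τ ^ 2 := by
        calc ∑ b' : Fin n, (χ (Sum.inr b') - τ) ^ 2
            = ∑ b' : Fin n, (χ (Sum.inr b') ^ 2 - 2 * τ * χ (Sum.inr b') + τ ^ 2) :=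
              Finset.sum_congr rfl fun b' _ => by ring
          _ = (∑ b' : Fin n, χ (Sum.inr b') ^ 2) - 2 * τ * R + n * τ ^ 2 := by
              rw [Finset.sum_add_distrib, Finset.sum_sub_distrib, ← Finset.mul_sum,
                Finset.sum_const, Finset.card_univ, Fintype.card_fin, nsmul_eq_mul, ← hRdef]
      have h2 : ∑ b' : Fin n, χ (Sum.inr b') ^ 2 ≤ R := by
        rw [hRdef]
        refine Finset.sum_le_sum fun b' _ => ?_
        calc χ (Sum.inr b') ^ 2 = χ (Sum.inr b') * χ (Sum.inr b') := sq (χ (Sum.inr b')) ▸ rfl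
          _ ≤ 1 * χ (Sum.inr b') := mul_le_mul_of_nonneg_right (hχ1 _) (hχ0 _)
          _ = χ (Sum.inr b') := one_mul _
      rw [hR] at h2
      rw [h1, hR]; linarith
    calc x ⬝ᵥ x = (∑ a' : Fin n, (χ (Sum.inl a') - σ) ^ 2)
          + s ^ 2 * (∑ b' : Fin n, (χ (Sum.inr b') - τ) ^ 2) := hxxval
      _ ≤ n * (σ * (1 - σ)) + s ^ 2 * (n * (τ * (1 - τ))) :=
          add_le_add hbs1 (mul_le_mul_of_nonneg_left hbs2 (sq_nonneg s))
      _ = 2 * (n * (σ * (1 - σ))) := by linear_combination (n : ℝ) * hs2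
  have hlow : Δ * R * (δ / 2 - σ) ≤ q ⬝ᵥ (A *ᵥ p) := by
    rw [hqAp]
    have hsum : (δ * Δ / 2) * R ≤ ∑ b', χ (Sum.inr b') * S b' := by
      rw [hRdef, Finset.mul_sum]
      refine Finset.sum_le_sum fun b' _ => ?_
      rcases eq_or_lt_of_le (hχ0 (Sum.inr b')) with h | h
      · rw [← h]; simp
      · calc δ * Δ / 2 * χ (Sum.inr b') = χ (Sum.inr b') * (δ * Δ / 2) := by ring
          _ ≤ χ (Sum.inr b') * S b' := mul_le_mul_of_nonneg_left (hδ b' h) (hχ0 _)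
    have h2 : Δ * R * (δ / 2 - σ) = (δ * Δ / 2) * R - Δ * σ * R := by ring
    rw [h2]; linarith
  have hxne : x ≠ 0 := by
    intro h0
    have hz : x ⬝ᵥ (A *ᵥ x) = 0 := by rw [h0]; simp
    rw [hxAx] at hz
    have hpos : 0 < Δ * R * (δ / 2 - σ) :=
      mul_pos (mul_pos hΔ0 hRpos) (by linarith)
    have hgt : 0 < 2 * s * (q ⬝ᵥ (A *ᵥ p)) :=
      mul_pos (by linarith) (lt_of_lt_of_le hpos hlow)
    linarith
  have hxxpos : 0 < x ⬝ᵥ x := by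
    have h1 : 0 ≤ x ⬝ᵥ x := by
      rw [show (x ⬝ᵥ x) = ∑ v, x v * x v from rfl]
      exact Finset.sum_nonneg fun v _ => mul_self_nonneg _
    rcases eq_or_lt_of_le h1 with h | h
    · exact absurd (dotProduct_self_eq_zero.1 h.symm) hxne
    · exact h
  have hmem : (x ⬝ᵥ (A *ᵥ x)) / (x ⬝ᵥ x) ∈ {ρ : ℝ | ∃ y : (Fin n ⊕ Fin n) → ℝ, y ≠ 0 ∧
      (y ⬝ᵥ (fun _ => 1)) = 0 ∧ y ⬝ᵥ (A *ᵥ y) = ρ * (y ⬝ᵥ y)} :=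
    ⟨x, hxne, hx1, by field_simp⟩
  have hle := hγ.2 hmem
  have hray : x ⬝ᵥ (A *ᵥ x) ≤ γ * Δ * (x ⬝ᵥ x) := by
    rw [div_le_iff₀ hxxpos] at hle
    linarith
  have hkey : s * (τ * (δ / 2 - σ)) ≤ γ * (σ * (1 - σ)) := by
    have c1 : 2 * s * (Δ * R * (δ / 2 - σ)) ≤ x ⬝ᵥ (A *ᵥ x) := by
      rw [hxAx]
      exact mul_le_mul_of_nonneg_left hlow (by positivity)
    have c2 : x ⬝ᵥ (A *ᵥ x) ≤ γ * Δ * (2 * (n * (σ * (1 - σ)))) :=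
      le_trans hray (mul_le_mul_of_nonneg_left hxxle (by positivity))
    have c4 : (2 * (Δ:ℝ) * n) * (s * (τ * (δ / 2 - σ))) ≤ (2 * (Δ:ℝ) * n) * (γ * (σ * (1 - σ))) := by
      calc (2 * (Δ:ℝ) * n) * (s * (τ * (δ / 2 - σ)))
          = 2 * s * (Δ * ((n:ℝ) * τ) * (δ / 2 - σ)) := by ring
        _ = 2 * s * (Δ * R * (δ / 2 - σ)) := by rw [hR]
        _ ≤ γ * Δ * (2 * (n * (σ * (1 - σ)))) := le_trans c1 c2
        _ = (2 * (Δ:ℝ) * n) * (γ * (σ * (1 - σ))) := by ring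
    exact le_of_mul_le_mul_left c4 (by positivity)
  have hkey2 : a * (τ * (δ / 2 - σ)) ≤ a * (γ * (a * b)) := by
    have h := mul_le_mul_of_nonneg_right hkey hb0.le
    calc a * (τ * (δ / 2 - σ)) = s * (τ * (δ / 2 - σ)) * b := by
          rw [hsdef]; field_simp [hb0.ne']
      _ ≤ γ * (σ * (1 - σ)) * b := h
      _ = γ * (a ^ 2) * b := by rw [ha2]
      _ = a * (γ * (a * b)) := by ring
  have h5 : τ * (δ / 2 - σ) ≤ γ * (a * b) := le_of_mul_le_mul_left hkey2 ha0
  have hab := sqrt_aux σ τ hσpos hσlt1 hτpos hτlt1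
  rw [← hadef, ← hbdef] at hab
  have h6 : τ * (δ / 2 - σ) ≤ γ * (Real.sqrt (σ * τ) - σ * τ) :=
    le_trans h5 (mul_le_mul_of_nonneg_left hab hγpos.le)
  have h7 : Real.sqrt (σ * τ) = τ * Real.sqrt (σ / τ) := by
    rw [show σ * τ = τ ^ 2 * (σ / τ) by field_simp, Real.sqrt_mul (by positivity),
      Real.sqrt_sq hτpos.le]
  rw [div_le_iff₀ hγpos]
  have h8 : τ * (δ / 2 - σ) ≤ τ * (γ * Real.sqrt (σ / τ) - γ * σ) := by
    calc τ * (δ / 2 - σ) ≤ γ * (Real.sqrt (σ * τ) - σ * τ) := h6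
      _ = τ * (γ * Real.sqrt (σ / τ) - γ * σ) := by rw [h7]; ring
  have h9 : δ / 2 - σ ≤ γ * Real.sqrt (σ / τ) - γ * σ := (mul_le_mul_iff_right₀ hτpos).mp h8
  linarith

/-- Lemma bounding `√(σ/τ)` for the iterative decoder analysis.
`G` is a bipartite `Δ`-regular connected graph on parts `V' = Fin n` (via `Sum.inl`) and
`V'' = Fin n` (via `Sum.inr`), `n > 1`, with second-eigenvalue ratio `γ > 0` (the
second largest eigenvalue `γ * Δ` of the adjacency matrix is characterized via the
greatest Rayleigh quotient over nonzero vectors orthogonal to the all-one vector).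
If `χ : V' ∪ V'' → [0,1]` is not identically zero on `V''` and every `v ∈ V''` with
`χ(v) > 0` satisfies `Σ_{u ∈ N(v)} χ(u) ≥ δΔ/2`, then `√(σ/τ) ≥ ((δ/2) − (1−γ)σ)/γ`. -/
theorem stmt_3 (n Δ : ℕ) (hn : 1 < n) (hΔ : 0 < Δ)
    (G : SimpleGraph (Fin n ⊕ Fin n)) [DecidableRel G.Adj]
    (hbipL : ∀ a b : Fin n, ¬ G.Adj (Sum.inl a) (Sum.inl b))
    (hbipR : ∀ a b : Fin n, ¬ G.Adj (Sum.inr a) (Sum.inr b))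
    (hreg : ∀ v, G.degree v = Δ)
    (hconn : G.Connected)
    (γ : ℝ) (hγpos : 0 < γ)
    (hγ : IsGreatest {ρ : ℝ | ∃ x : (Fin n ⊕ Fin n) → ℝ, x ≠ 0 ∧
        (x ⬝ᵥ (fun _ => 1)) = 0 ∧
        x ⬝ᵥ ((G.adjMatrix ℝ).mulVec x) = ρ * (x ⬝ᵥ x)} (γ * Δ))
    (χ : (Fin n ⊕ Fin n) → ℝ)
    (hχ : ∀ v, χ v ∈ Set.Icc (0 : ℝ) 1)
    (hχne : ∃ v : Fin n, χ (Sum.inr v) ≠ 0)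
    (σ τ : ℝ)
    (hσ : σ = (1 / (n : ℝ)) * ∑ u : Fin n, χ (Sum.inl u))
    (hτ : τ = (1 / (n : ℝ)) * ∑ v : Fin n, χ (Sum.inr v))
    (δ : ℝ)
    (hδ : ∀ v : Fin n, 0 < χ (Sum.inr v) →
        δ * Δ / 2 ≤ ∑ u ∈ G.neighborFinset (Sum.inr v), χ u) :
    (δ / 2 - (1 - γ) * σ) / γ ≤ Real.sqrt (σ / τ) :=
  stmt_3_aux n Δ hn hΔ G hbipL hbipR hreg hconn γ hγpos hγ χ hχ hχne σ τ hσ hτ δ hδ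
end

section
/- Let G = (V' : V'', E) be a bipartite Δ-regular connected graph with |V'| = |V''| = n > 1, adjacency matrix A_G and second-eigenvalue ratio γ = γ_G. Let s = (s_u)_{u∈V'} and t = (t_v)_{v∈V''} be vectors in ℝⁿ, set σ = (1/n) Σ_{u∈V'} s_u and τ = (1/n) Σ_{v∈V''} t_v, let y = s − σ·𝟏 and z = t − τ·𝟏, and let x ∈ ℝ^{2n} be the concatenation of s and t. Then |⟨x, A_G x⟩ − 2στΔn| ≤ 2γΔ·‖y‖·‖z‖, where ⟨·,·⟩ is the standard inner product and ‖·‖ the Euclidean norm. -/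
open Matrix BigOperators

/-- Quadratic-form estimate for bipartite expanders.
`G` is a bipartite `Δ`-regular connected graph on parts `V' = Fin n` (via `Sum.inl`) and
`V'' = Fin n` (via `Sum.inr`), `n > 1`, adjacency matrix `A_G = G.adjMatrix ℝ`, and
second-eigenvalue ratio `γ` (i.e. `γ * Δ` is the second largest eigenvalue of `A_G`,
characterized as the greatest Rayleigh quotient over nonzero vectors orthogonal to the
all-one vector).  For vectors `s, t ∈ ℝⁿ` with averages `σ, τ`, the concatenated vector
`x = Sum.elim s t` satisfies `|⟨x, A_G x⟩ − 2στΔn| ≤ 2γΔ‖s − σ𝟏‖·‖t − τ𝟏‖`. -/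
theorem stmt_5 (n Δ : ℕ) (hn : 1 < n) (hΔ : 0 < Δ)
    (G : SimpleGraph (Fin n ⊕ Fin n)) [DecidableRel G.Adj]
    (hbipL : ∀ a b : Fin n, ¬ G.Adj (Sum.inl a) (Sum.inl b))
    (hbipR : ∀ a b : Fin n, ¬ G.Adj (Sum.inr a) (Sum.inr b))
    (hreg : ∀ v, G.degree v = Δ)
    (hconn : G.Connected)
    (γ : ℝ)
    (hγ : IsGreatest {ρ : ℝ | ∃ x : (Fin n ⊕ Fin n) → ℝ, x ≠ 0 ∧
        (x ⬝ᵥ (fun _ => 1)) = 0 ∧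
        x ⬝ᵥ ((G.adjMatrix ℝ).mulVec x) = ρ * (x ⬝ᵥ x)} (γ * Δ))
    (s t : Fin n → ℝ) (σ τ : ℝ)
    (hσ : σ = (1 / (n : ℝ)) * ∑ u : Fin n, s u)
    (hτ : τ = (1 / (n : ℝ)) * ∑ v : Fin n, t v) :
    |(Sum.elim s t) ⬝ᵥ ((G.adjMatrix ℝ).mulVec (Sum.elim s t)) - 2 * σ * τ * Δ * n|
      ≤ 2 * γ * Δ * Real.sqrt (∑ u : Fin n, (s u - σ) ^ 2)
          * Real.sqrt (∑ v : Fin n, (t v - τ) ^ 2) := by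
  have hn0 : (n : ℝ) ≠ 0 := by positivity
  set E : Fin n → Fin n → ℝ := fun u v => if G.Adj (Sum.inl u) (Sum.inr v) then 1 else 0
    with hE
  -- row sums
  have degsum : ∀ w : Fin n ⊕ Fin n,
      ∑ w' : Fin n ⊕ Fin n, (if G.Adj w w' then (1:ℝ) else 0) = Δ := by
    intro w
    rw [Finset.sum_boole]
    rw [← SimpleGraph.neighborFinset_eq_filter, ← SimpleGraph.degree, hreg]
  have rowsum : ∀ u : Fin n, ∑ v : Fin n, E u v = Δ := by
    intro u
    have h := degsum (Sum.inl u)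
    rw [Fintype.sum_sum_type] at h
    simpa [hE, hbipL] using h
  have colsum : ∀ v : Fin n, ∑ u : Fin n, E u v = Δ := by
    intro v
    have h := degsum (Sum.inr v)
    rw [Fintype.sum_sum_type] at h
    simp only [hbipR, if_false, Finset.sum_const_zero, add_zero] at h
    rw [← h]
    refine Finset.sum_congr rfl fun u _ => ?_
    simp [hE, G.adj_comm]
  -- key expansion of the quadratic form
  have key : ∀ p q : Fin n → ℝ,
      (Sum.elim p q) ⬝ᵥ ((G.adjMatrix ℝ).mulVec (Sum.elim p q))
        = 2 * ∑ u : Fin n, ∑ v : Fin n, p u * E u v * q v := by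
    intro p q
    simp only [dotProduct, mulVec, Fintype.sum_sum_type, Sum.elim_inl, Sum.elim_inr,
      SimpleGraph.adjMatrix_apply, hbipL, hbipR, if_false, zero_mul,
      Finset.sum_const_zero, zero_add, add_zero]
    have h2 : ∑ v : Fin n, q v * ∑ u : Fin n,
        (if G.Adj (Sum.inr v) (Sum.inl u) then (1:ℝ) else 0) * p u
        = ∑ u : Fin n, ∑ v : Fin n, p u * E u v * q v := by
      simp_rw [Finset.mul_sum]
      rw [Finset.sum_comm]
      refine Finset.sum_congr rfl fun u _ => Finset.sum_congr rfl fun v _ => ?_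
      simp only [hE, G.adj_comm]
      ring
    have h1 : ∑ u : Fin n, p u * ∑ v : Fin n,
        (if G.Adj (Sum.inl u) (Sum.inr v) then (1:ℝ) else 0) * q v
        = ∑ u : Fin n, ∑ v : Fin n, p u * E u v * q v := by
      simp_rw [Finset.mul_sum]
      refine Finset.sum_congr rfl fun u _ => Finset.sum_congr rfl fun v _ => ?_
      simp only [hE]; ring
    rw [h1, h2]; ring
  -- averages
  have hsum_s : ∑ u : Fin n, s u = n * σ := by rw [hσ]; field_simp
  have hsum_t : ∑ v : Fin n, t v = n * τ := by rw [hτ]; field_simp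
  have hys : ∑ u : Fin n, (s u - σ) = 0 := by
    rw [Finset.sum_sub_distrib, hsum_s, Finset.sum_const, Finset.card_univ,
      Fintype.card_fin, nsmul_eq_mul]
    ring
  have hzs : ∑ v : Fin n, (t v - τ) = 0 := by
    rw [Finset.sum_sub_distrib, hsum_t, Finset.sum_const, Finset.card_univ,
      Fintype.card_fin, nsmul_eq_mul]
    ring
  -- expansion of the bilinear form
  have hEE : ∑ u : Fin n, ∑ v : Fin n, E u v = Δ * n := by
    simp_rw [rowsum]
    rw [Finset.sum_const, Finset.card_univ, Fintype.card_fin, nsmul_eq_mul]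
    ring
  have hEt : ∑ u : Fin n, ∑ v : Fin n, E u v * t v = Δ * (n * τ) := by
    rw [Finset.sum_comm]
    simp_rw [← Finset.sum_mul, colsum]
    rw [← Finset.mul_sum, hsum_t]
  have hsE : ∑ u : Fin n, s u * ∑ v : Fin n, E u v = Δ * (n * σ) := by
    simp_rw [rowsum]
    rw [← Finset.sum_mul, hsum_s]
    ring
  have expand : ∑ u : Fin n, ∑ v : Fin n, (s u - σ) * E u v * (t v - τ)
      = (∑ u : Fin n, ∑ v : Fin n, s u * E u v * t v) - σ * τ * Δ * n := by
    have e1 : ∀ u v : Fin n, (s u - σ) * E u v * (t v - τ)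
        = s u * E u v * t v - σ * (E u v * t v) - τ * (s u * E u v) + σ * τ * E u v := by
      intro u v; ring
    simp_rw [e1, Finset.sum_add_distrib, Finset.sum_sub_distrib, ← Finset.mul_sum]
    rw [hEt, hsE, hEE]
    ring
  -- Rayleigh bound
  have ray : ∀ p q : Fin n → ℝ, (∑ u : Fin n, p u) = 0 → (∑ v : Fin n, q v) = 0 →
      Sum.elim p q ≠ 0 →
      2 * (∑ u : Fin n, ∑ v : Fin n, p u * E u v * q v)
        ≤ γ * Δ * ((∑ u : Fin n, (p u) ^ 2) + ∑ v : Fin n, (q v) ^ 2) := by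
    intro p q hp hq hne
    set w : Fin n ⊕ Fin n → ℝ := Sum.elim p q with hw
    have hww : w ⬝ᵥ w = (∑ u : Fin n, (p u) ^ 2) + ∑ v : Fin n, (q v) ^ 2 := by
      simp [dotProduct, Fintype.sum_sum_type, hw, sq]
    have hwwnn : 0 ≤ w ⬝ᵥ w := Finset.sum_nonneg fun i _ => mul_self_nonneg _
    have hwwne : w ⬝ᵥ w ≠ 0 := fun h => hne (dotProduct_self_eq_zero.mp h)
    have hwwpos : 0 < w ⬝ᵥ w := lt_of_le_of_ne hwwnn (Ne.symm hwwne)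
    have horth : w ⬝ᵥ (fun _ => (1:ℝ)) = 0 := by
      simp [dotProduct, Fintype.sum_sum_type, hw, hp, hq]
    have hmem : (w ⬝ᵥ ((G.adjMatrix ℝ).mulVec w)) / (w ⬝ᵥ w) ∈
        {ρ : ℝ | ∃ x : (Fin n ⊕ Fin n) → ℝ, x ≠ 0 ∧
          (x ⬝ᵥ (fun _ => 1)) = 0 ∧
          x ⬝ᵥ ((G.adjMatrix ℝ).mulVec x) = ρ * (x ⬝ᵥ x)} :=
      ⟨w, hne, horth, (div_mul_cancel₀ _ hwwne).symm⟩
    have hle := hγ.2 hmem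
    rw [div_le_iff₀ hwwpos] at hle
    rw [hw, key p q, hww] at hle
    exact hle
  -- put things together
  have hx : (Sum.elim s t) ⬝ᵥ ((G.adjMatrix ℝ).mulVec (Sum.elim s t)) - 2 * σ * τ * Δ * n
      = 2 * ∑ u : Fin n, ∑ v : Fin n, (s u - σ) * E u v * (t v - τ) := by
    rw [key s t, expand]; ring
  rw [hx]
  set Ny := ∑ u : Fin n, (s u - σ) ^ 2 with hNy
  set Nz := ∑ v : Fin n, (t v - τ) ^ 2 with hNz
  have hNynn : 0 ≤ Ny := Finset.sum_nonneg fun i _ => sq_nonneg _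
  have hNznn : 0 ≤ Nz := Finset.sum_nonneg fun i _ => sq_nonneg _
  by_cases hy0 : Ny = 0
  · have hy : ∀ u : Fin n, s u - σ = 0 := by
      intro u
      have := (Finset.sum_eq_zero_iff_of_nonneg (fun i _ => sq_nonneg (s i - σ))).mp hy0 u
        (Finset.mem_univ u)
      exact sq_eq_zero_iff.mp this
    have : ∑ u : Fin n, ∑ v : Fin n, (s u - σ) * E u v * (t v - τ) = 0 :=
      Finset.sum_eq_zero fun u _ => Finset.sum_eq_zero fun v _ => by rw [hy u]; ring
    rw [this, hy0]
    simp
  by_cases hz0 : Nz = 0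
  · have hz : ∀ v : Fin n, t v - τ = 0 := by
      intro v
      have := (Finset.sum_eq_zero_iff_of_nonneg (fun i _ => sq_nonneg (t i - τ))).mp hz0 v
        (Finset.mem_univ v)
      exact sq_eq_zero_iff.mp this
    have : ∑ u : Fin n, ∑ v : Fin n, (s u - σ) * E u v * (t v - τ) = 0 :=
      Finset.sum_eq_zero fun u _ => Finset.sum_eq_zero fun v _ => by rw [hz v]; ring
    rw [this, hz0]
    simp
  have hNy' : 0 < Ny := lt_of_le_of_ne hNynn (Ne.symm hy0)
  have hNz' : 0 < Nz := lt_of_le_of_ne hNznn (Ne.symm hz0)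
  set a := Real.sqrt Nz with ha'
  set b := Real.sqrt Ny with hb'
  have ha : 0 < a := Real.sqrt_pos.mpr hNz'
  have hb : 0 < b := Real.sqrt_pos.mpr hNy'
  have ha2 : a ^ 2 = Nz := Real.sq_sqrt hNznn
  have hb2 : b ^ 2 = Ny := Real.sq_sqrt hNynn
  -- nonzero witness
  obtain ⟨u0, hu0⟩ : ∃ u : Fin n, s u - σ ≠ 0 := by
    by_contra h
    push_neg at h
    exact hy0 (Finset.sum_eq_zero fun u _ => by rw [h u]; ring)
  have hQ : ∀ (c : ℝ), ∑ u : Fin n, ∑ v : Fin n,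
      (a * (s u - σ)) * E u v * (c * b * (t v - τ))
      = c * (a * b) * ∑ u : Fin n, ∑ v : Fin n, (s u - σ) * E u v * (t v - τ) := by
    intro c
    rw [Finset.mul_sum]
    refine Finset.sum_congr rfl fun u _ => ?_
    rw [Finset.mul_sum]
    refine Finset.sum_congr rfl fun v _ => ?_
    ring
  have hsq : ∀ (c : ℝ) (r : ℝ), (c * r) ^ 2 = c ^ 2 * r ^ 2 := fun c r => by ring
  have bound : ∀ (c : ℝ), c = 1 ∨ c = -1 →
      2 * (c * (a * b) * ∑ u : Fin n, ∑ v : Fin n, (s u - σ) * E u v * (t v - τ))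
        ≤ γ * Δ * (2 * (Nz * Ny)) := by
    intro c hc
    have hpz : ∑ u : Fin n, (a * (s u - σ)) = 0 := by
      rw [← Finset.mul_sum, hys]; ring
    have hqz : ∑ v : Fin n, (c * b * (t v - τ)) = 0 := by
      rw [← Finset.mul_sum, hzs]; ring
    have hne : Sum.elim (fun u => a * (s u - σ)) (fun v => c * b * (t v - τ)) ≠ 0 := by
      intro h
      have := congrFun h (Sum.inl u0)
      simp only [Sum.elim_inl, Pi.zero_apply] at this
      exact hu0 (by
        rcases mul_eq_zero.mp this with h' | h'
        · exact absurd h' ha.ne'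
        · exact h')
    have := ray _ _ hpz hqz hne
    rw [hQ c] at this
    have hps : ∑ u : Fin n, (a * (s u - σ)) ^ 2 = Nz * Ny := by
      simp_rw [hsq, ← Finset.mul_sum, ← hNy, ha2]
    have hqs : ∑ v : Fin n, (c * b * (t v - τ)) ^ 2 = Nz * Ny := by
      simp_rw [hsq, ← Finset.mul_sum, ← hNz]
      rcases hc with rfl | rfl <;> rw [hb2] <;> ring
    rw [hps, hqs] at this
    linarith
  have h1 := bound 1 (Or.inl rfl)
  have h2 := bound (-1) (Or.inr rfl)
  have hab : Nz * Ny = (a * b) ^ 2 := by rw [hsq, ha2, hb2]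
  rw [hab] at h1 h2
  have habpos : 0 < a * b := mul_pos ha hb
  set Q := ∑ u : Fin n, ∑ v : Fin n, (s u - σ) * E u v * (t v - τ) with hQdef
  have h1' : (2 * Q) * (a * b) ≤ (2 * γ * Δ * (a * b)) * (a * b) := by linarith only [h1]
  have h2' : (-(2 * Q)) * (a * b) ≤ (2 * γ * Δ * (a * b)) * (a * b) := by linarith only [h2]
  have hu : 2 * Q ≤ 2 * γ * Δ * (a * b) := (mul_le_mul_iff_of_pos_right habpos).mp h1'
  have hl : -(2 * Q) ≤ 2 * γ * Δ * (a * b) := (mul_le_mul_iff_of_pos_right habpos).mp h2'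
  rw [abs_le]
  constructor
  · linarith
  · linarith
end

section
/- Let G = (V' : V'', E) be a bipartite Δ-regular connected graph with |V'| = |V''| = n > 1 and second-eigenvalue ratio γ = γ_G, and let χ : V' ∪ V'' → ℝ be any function on the vertices. Define w(e) = χ(u)χ(v) for each edge e = {u,v}, and the averages E_G{w} = (1/(Δn)) Σ_{e∈E} w(e), E'_G{χ^i} = (1/n) Σ_{u∈V'} χ(u)^i, E''_G{χ^i} = (1/n) Σ_{u∈V''} χ(u)^i, and variances Var'_G{χ} = E'_G{χ²} − (E'_G{χ})², Var''_G{χ} = E''_G{χ²} − (E''_G{χ})². Then |E_G{w} − E'_G{χ}·E''_G{χ}| ≤ γ·√(Var'_G{χ} · Var''_G{χ}). -/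
open Matrix BigOperators

/-- Expander mixing lemma in expectation/variance form.
`G` is a bipartite `Δ`-regular connected graph on parts `V' = Fin n` (via `Sum.inl`) and
`V'' = Fin n` (via `Sum.inr`), `n > 1`, with second-eigenvalue ratio `γ` (i.e. `γ * Δ` is
the second largest eigenvalue of the adjacency matrix, characterized as the greatest Rayleigh
quotient over nonzero vectors orthogonal to the all-one vector).  For any `χ` on the vertices,
the average of `w(e) = χ(u)χ(v)` over the `Δn` edges (each edge of the bipartite graph has
exactly one endpoint in `V'`, so the edge sum equals the sum over `u ∈ V'` of sums over the
neighbors of `u`) satisfies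
`|E_G{w} − E'_G{χ}·E''_G{χ}| ≤ γ·√(Var'_G{χ}·Var''_G{χ})`. -/
theorem stmt_6 (n Δ : ℕ) (hn : 1 < n) (hΔ : 0 < Δ)
    (G : SimpleGraph (Fin n ⊕ Fin n)) [DecidableRel G.Adj]
    (hbipL : ∀ a b : Fin n, ¬ G.Adj (Sum.inl a) (Sum.inl b))
    (hbipR : ∀ a b : Fin n, ¬ G.Adj (Sum.inr a) (Sum.inr b))
    (hreg : ∀ v, G.degree v = Δ)
    (hconn : G.Connected)
    (γ : ℝ)
    (hγ : IsGreatest {ρ : ℝ | ∃ x : (Fin n ⊕ Fin n) → ℝ, x ≠ 0 ∧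
        (x ⬝ᵥ (fun _ => 1)) = 0 ∧
        x ⬝ᵥ ((G.adjMatrix ℝ).mulVec x) = ρ * (x ⬝ᵥ x)} (γ * Δ))
    (χ : (Fin n ⊕ Fin n) → ℝ)
    (Ew E₁ E₂ E₁sq E₂sq Var₁ Var₂ : ℝ)
    (hEw : Ew = (1 / ((Δ : ℝ) * n)) *
        ∑ u : Fin n, ∑ v ∈ G.neighborFinset (Sum.inl u), χ (Sum.inl u) * χ v)
    (hE₁ : E₁ = (1 / (n : ℝ)) * ∑ u : Fin n, χ (Sum.inl u))
    (hE₂ : E₂ = (1 / (n : ℝ)) * ∑ v : Fin n, χ (Sum.inr v))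
    (hE₁sq : E₁sq = (1 / (n : ℝ)) * ∑ u : Fin n, (χ (Sum.inl u)) ^ 2)
    (hE₂sq : E₂sq = (1 / (n : ℝ)) * ∑ v : Fin n, (χ (Sum.inr v)) ^ 2)
    (hVar₁ : Var₁ = E₁sq - E₁ ^ 2)
    (hVar₂ : Var₂ = E₂sq - E₂ ^ 2) :
    |Ew - E₁ * E₂| ≤ γ * Real.sqrt (Var₁ * Var₂) := by
  have hn0 : (0:ℝ) < n := by positivity
  have hΔ0 : (0:ℝ) < Δ := by exact_mod_cast hΔ
  obtain ⟨xL, hxL⟩ : ∃ f : Fin n → ℝ, f = fun a => χ (Sum.inl a) - E₁ := ⟨_, rfl⟩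
  obtain ⟨xR, hxR⟩ : ∃ f : Fin n → ℝ, f = fun b => χ (Sum.inr b) - E₂ := ⟨_, rfl⟩
  have hsumL : ∑ a, xL a = 0 := by
    simp only [hxL, Finset.sum_sub_distrib, Finset.sum_const, Finset.card_univ,
      Fintype.card_fin, nsmul_eq_mul, hE₁]
    field_simp
    ring
  have hsumR : ∑ b, xR b = 0 := by
    simp only [hxR, Finset.sum_sub_distrib, Finset.sum_const, Finset.card_univ,
      Fintype.card_fin, nsmul_eq_mul, hE₂]
    field_simp
    ring
  have hsqL : ∑ a, xL a ^ 2 = n * Var₁ := by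
    have h : ∀ a : Fin n, xL a ^ 2 = χ (Sum.inl a) ^ 2 - 2 * E₁ * χ (Sum.inl a) + E₁ ^ 2 := by
      intro a; simp only [hxL]; ring
    rw [Finset.sum_congr rfl fun a _ => h a]
    simp only [Finset.sum_add_distrib, Finset.sum_sub_distrib, ← Finset.mul_sum,
      Finset.sum_const, Finset.card_univ, Fintype.card_fin, nsmul_eq_mul]
    rw [hVar₁, hE₁sq, hE₁]
    field_simp
    ring
  have hsqR : ∑ b, xR b ^ 2 = n * Var₂ := by
    have h : ∀ b : Fin n, xR b ^ 2 = χ (Sum.inr b) ^ 2 - 2 * E₂ * χ (Sum.inr b) + E₂ ^ 2 := by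
      intro b; simp only [hxR]; ring
    rw [Finset.sum_congr rfl fun b _ => h b]
    simp only [Finset.sum_add_distrib, Finset.sum_sub_distrib, ← Finset.mul_sum,
      Finset.sum_const, Finset.card_univ, Fintype.card_fin, nsmul_eq_mul]
    rw [hVar₂, hE₂sq, hE₂]
    field_simp
    ring
  -- neighbor sums
  have hN : ∀ (u : Fin n) (g : Fin n ⊕ Fin n → ℝ),
      ∑ v ∈ G.neighborFinset (Sum.inl u), g v
        = ∑ b, if G.Adj (Sum.inl u) (Sum.inr b) then g (Sum.inr b) else 0 := by
    intro u g
    rw [SimpleGraph.neighborFinset_eq_filter, Finset.sum_filter, Fintype.sum_sum_type]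
    simp [hbipL]
  have hN' : ∀ (u : Fin n) (g : Fin n ⊕ Fin n → ℝ),
      ∑ v ∈ G.neighborFinset (Sum.inr u), g v
        = ∑ a, if G.Adj (Sum.inl a) (Sum.inr u) then g (Sum.inl a) else 0 := by
    intro u g
    rw [SimpleGraph.neighborFinset_eq_filter, Finset.sum_filter, Fintype.sum_sum_type]
    simp only [hbipR, if_false, Finset.sum_const_zero, add_zero]
    refine Finset.sum_congr rfl fun a _ => ?_
    by_cases h : G.Adj (Sum.inl a) (Sum.inr u)
    · rw [if_pos h, if_pos (G.adj_symm h)]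
    · rw [if_neg h, if_neg fun h' => h (G.adj_symm h')]
  have hrow : ∀ a : Fin n, ∑ b, (if G.Adj (Sum.inl a) (Sum.inr b) then (1:ℝ) else 0) = Δ := by
    intro a
    rw [← hN a (fun _ => 1), Finset.sum_const, SimpleGraph.card_neighborFinset_eq_degree,
      hreg]
    simp
  have hcol : ∀ b : Fin n, ∑ a, (if G.Adj (Sum.inl a) (Sum.inr b) then (1:ℝ) else 0) = Δ := by
    intro b
    rw [← hN' b (fun _ => 1), Finset.sum_const, SimpleGraph.card_neighborFinset_eq_degree,
      hreg]
    simp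
  obtain ⟨T, hT⟩ : ∃ T : ℝ,
      T = ∑ a, ∑ b, (if G.Adj (Sum.inl a) (Sum.inr b) then xL a * xR b else 0) := ⟨_, rfl⟩
  -- edge sum expansion
  have hS : (∑ u : Fin n, ∑ v ∈ G.neighborFinset (Sum.inl u), χ (Sum.inl u) * χ v)
      = (Δ:ℝ) * n * (E₁ * E₂) + T := by
    have step1 : ∀ u : Fin n, ∑ v ∈ G.neighborFinset (Sum.inl u), χ (Sum.inl u) * χ v
        = ∑ b, (E₁ * E₂ * (if G.Adj (Sum.inl u) (Sum.inr b) then (1:ℝ) else 0)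
            + E₁ * (if G.Adj (Sum.inl u) (Sum.inr b) then xR b else 0)
            + E₂ * xL u * (if G.Adj (Sum.inl u) (Sum.inr b) then (1:ℝ) else 0)
            + (if G.Adj (Sum.inl u) (Sum.inr b) then xL u * xR b else 0)) := by
      intro u
      rw [hN u (fun v => χ (Sum.inl u) * χ v)]
      refine Finset.sum_congr rfl fun b _ => ?_
      have hu : χ (Sum.inl u) = E₁ + xL u := by rw [hxL]; ring
      have hv : χ (Sum.inr b) = E₂ + xR b := by rw [hxR]; ring
      split
      · rw [hu, hv]; ring
      · ring
    rw [Finset.sum_congr rfl fun u _ => step1 u]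
    simp only [Finset.sum_add_distrib]
    have t1 : (∑ u : Fin n, ∑ b : Fin n,
        E₁ * E₂ * (if G.Adj (Sum.inl u) (Sum.inr b) then (1:ℝ) else 0)) = (Δ:ℝ) * n * (E₁ * E₂) := by
      have h : ∀ u : Fin n, (∑ b : Fin n,
          E₁ * E₂ * (if G.Adj (Sum.inl u) (Sum.inr b) then (1:ℝ) else 0)) = E₁ * E₂ * Δ := by
        intro u; rw [← Finset.mul_sum, hrow]
      rw [Finset.sum_congr rfl fun u _ => h u, Finset.sum_const, Finset.card_univ,
        Fintype.card_fin, nsmul_eq_mul]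
      ring
    have t2 : (∑ u : Fin n, ∑ b : Fin n,
        E₁ * (if G.Adj (Sum.inl u) (Sum.inr b) then xR b else 0)) = 0 := by
      rw [Finset.sum_comm]
      have h : ∀ b : Fin n, (∑ u : Fin n,
          E₁ * (if G.Adj (Sum.inl u) (Sum.inr b) then xR b else 0)) = E₁ * Δ * xR b := by
        intro b
        have h2 : ∀ u : Fin n, E₁ * (if G.Adj (Sum.inl u) (Sum.inr b) then xR b else 0)
            = E₁ * xR b * (if G.Adj (Sum.inl u) (Sum.inr b) then (1:ℝ) else 0) := by
          intro u; split <;> ring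
        rw [Finset.sum_congr rfl fun u _ => h2 u, ← Finset.mul_sum, hcol]; ring
      rw [Finset.sum_congr rfl fun b _ => h b, ← Finset.mul_sum, hsumR, mul_zero]
    have t3 : (∑ u : Fin n, ∑ b : Fin n,
        E₂ * xL u * (if G.Adj (Sum.inl u) (Sum.inr b) then (1:ℝ) else 0)) = 0 := by
      have h : ∀ u : Fin n, (∑ b : Fin n,
          E₂ * xL u * (if G.Adj (Sum.inl u) (Sum.inr b) then (1:ℝ) else 0)) = E₂ * Δ * xL u := by
        intro u; rw [← Finset.mul_sum, hrow]; ring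
      rw [Finset.sum_congr rfl fun u _ => h u, ← Finset.mul_sum, hsumL, mul_zero]
    rw [t1, t2, t3, hT]
    ring
  -- Rayleigh quotient bound
  have hRay : ∀ y : (Fin n ⊕ Fin n) → ℝ, (y ⬝ᵥ (fun _ => 1)) = 0 →
      y ⬝ᵥ ((G.adjMatrix ℝ).mulVec y) ≤ γ * Δ * (y ⬝ᵥ y) := by
    intro y hy
    by_cases hy0 : y = 0
    · subst hy0; simp
    · have hyy : 0 < y ⬝ᵥ y := by
        have h1 : 0 ≤ y ⬝ᵥ y := Finset.sum_nonneg fun v _ => mul_self_nonneg _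
        rcases h1.lt_or_eq with h | h
        · exact h
        · exact absurd (dotProduct_self_eq_zero.mp h.symm) hy0
      have hmem : (y ⬝ᵥ ((G.adjMatrix ℝ).mulVec y)) / (y ⬝ᵥ y) ∈
          {ρ : ℝ | ∃ x : (Fin n ⊕ Fin n) → ℝ, x ≠ 0 ∧ (x ⬝ᵥ (fun _ => 1)) = 0 ∧
            x ⬝ᵥ ((G.adjMatrix ℝ).mulVec x) = ρ * (x ⬝ᵥ x)} :=
        ⟨y, hy0, hy, by field_simp⟩
      have hle := hγ.2 hmem
      rw [div_le_iff₀ hyy] at hle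
      exact hle
  -- key inequality for scaled test vectors
  have key : ∀ t s : ℝ, 2 * (t * s) * T ≤ γ * Δ * (t ^ 2 * (n * Var₁) + s ^ 2 * (n * Var₂)) := by
    intro t s
    obtain ⟨y, hy⟩ : ∃ y : (Fin n ⊕ Fin n) → ℝ,
        y = Sum.elim (fun a => t * xL a) (fun b => s * xR b) := ⟨_, rfl⟩
    have h1 : (y ⬝ᵥ (fun _ => 1)) = 0 := by
      simp [hy, dotProduct, Fintype.sum_sum_type, ← Finset.mul_sum, hsumL, hsumR]
    have haux : ∀ c d : ℝ,
        (∑ a, ∑ b, (if G.Adj (Sum.inl a) (Sum.inr b) then (c * xL a) * (d * xR b) else 0))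
          = c * d * T := by
      intro c d
      rw [hT, Finset.mul_sum]
      refine Finset.sum_congr rfl fun a _ => ?_
      rw [Finset.mul_sum]
      refine Finset.sum_congr rfl fun b _ => ?_
      split <;> ring
    have h2 : y ⬝ᵥ ((G.adjMatrix ℝ).mulVec y) = 2 * (t * s) * T := by
      simp only [dotProduct, Matrix.mulVec, Fintype.sum_sum_type,
        SimpleGraph.adjMatrix_apply, hy, Sum.elim_inl, Sum.elim_inr,
        ite_mul, one_mul, zero_mul, mul_ite, mul_zero]
      simp only [hbipL, hbipR, if_false, Finset.sum_const_zero, zero_add, add_zero]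
      have e1 : (∑ a, t * xL a * ∑ b, (if G.Adj (Sum.inl a) (Sum.inr b) then s * xR b else 0))
          = t * s * T := by
        rw [← haux t s]
        refine Finset.sum_congr rfl fun a _ => ?_
        rw [Finset.mul_sum]
        refine Finset.sum_congr rfl fun b _ => ?_
        split <;> ring
      have e2 : (∑ b, s * xR b * ∑ a, (if G.Adj (Sum.inr b) (Sum.inl a) then t * xL a else 0))
          = t * s * T := by
        rw [← haux t s, Finset.sum_comm]
        refine Finset.sum_congr rfl fun a _ => ?_
        rw [Finset.mul_sum]
        refine Finset.sum_congr rfl fun b _ => ?_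
        by_cases h : G.Adj (Sum.inl b) (Sum.inr a)
        · rw [if_pos h, if_pos (G.adj_symm h)]; ring
        · rw [if_neg h, if_neg fun h' => h (G.adj_symm h')]; ring
      rw [e1, e2]; ring
    have h3 : y ⬝ᵥ y = t ^ 2 * (n * Var₁) + s ^ 2 * (n * Var₂) := by
      rw [← hsqL, ← hsqR]
      simp only [dotProduct, Fintype.sum_sum_type, hy, Sum.elim_inl, Sum.elim_inr,
        Finset.mul_sum]
      congr 1 <;> refine Finset.sum_congr rfl fun _ _ => by ring
    have := hRay y h1
    rw [h2, h3] at this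
    exact this
  have hV1 : 0 ≤ Var₁ := by
    have h := Finset.sum_nonneg fun a (_ : a ∈ Finset.univ) => sq_nonneg (xL a)
    rw [hsqL] at h
    nlinarith
  have hV2 : 0 ≤ Var₂ := by
    have h := Finset.sum_nonneg fun b (_ : b ∈ Finset.univ) => sq_nonneg (xR b)
    rw [hsqR] at h
    nlinarith
  have hEwT : Ew - E₁ * E₂ = T / ((Δ:ℝ) * n) := by
    rw [hEw, hS]
    field_simp
    ring
  rcases hV1.lt_or_eq with hV1p | hV1z
  · rcases hV2.lt_or_eq with hV2p | hV2z
    · -- main case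
      set a : ℝ := Real.sqrt Var₁ with ha
      set b : ℝ := Real.sqrt Var₂ with hb
      have hap : 0 < a := Real.sqrt_pos.mpr hV1p
      have hbp : 0 < b := Real.sqrt_pos.mpr hV2p
      have ha2 : a ^ 2 = Var₁ := Real.sq_sqrt hV1p.le
      have hb2 : b ^ 2 = Var₂ := Real.sq_sqrt hV2p.le
      set t : ℝ := Real.sqrt (b / a) with ht
      set s : ℝ := Real.sqrt (a / b) with hs
      have hts : t * s = 1 := by
        rw [ht, hs, ← Real.sqrt_mul (div_pos hbp hap).le]
        rw [show b / a * (a / b) = 1 by field_simp]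
        exact Real.sqrt_one
      have ht2 : t ^ 2 = b / a := Real.sq_sqrt (div_pos hbp hap).le
      have hs2 : s ^ 2 = a / b := Real.sq_sqrt (div_pos hap hbp).le
      have hr : t ^ 2 * ((n:ℝ) * Var₁) + s ^ 2 * ((n:ℝ) * Var₂) = 2 * ((n:ℝ) * (a * b)) := by
        rw [ht2, hs2, ← ha2, ← hb2]
        field_simp
        ring
      have k1 := key t s
      rw [hts, hr] at k1
      have hts2 : (-t) * s = -1 := by rw [neg_mul, hts]
      have hr2 : (-t) ^ 2 * ((n:ℝ) * Var₁) + s ^ 2 * ((n:ℝ) * Var₂) = 2 * ((n:ℝ) * (a * b)) := by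
        rw [neg_sq]; exact hr
      have k2 := key (-t) s
      rw [hts2, hr2] at k2
      have habs : |T| ≤ γ * Δ * ((n:ℝ) * (a * b)) := by
        rw [abs_le]; constructor <;> linarith [k1, k2]
      have hsq : Real.sqrt (Var₁ * Var₂) = a * b := by
        rw [Real.sqrt_mul hV1p.le, ha, hb]
      rw [hEwT, hsq, abs_div, abs_of_pos (by positivity : (0:ℝ) < (Δ:ℝ) * n),
        div_le_iff₀ (by positivity : (0:ℝ) < (Δ:ℝ) * n)]
      calc |T| ≤ γ * Δ * ((n:ℝ) * (a * b)) := habs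
        _ = γ * (a * b) * ((Δ:ℝ) * n) := by ring
    · -- Var₂ = 0
      have hx0 : ∀ b : Fin n, xR b = 0 := by
        have h0 : ∑ b, xR b ^ 2 = 0 := by rw [hsqR, ← hV2z, mul_zero]
        intro b
        have := (Finset.sum_eq_zero_iff_of_nonneg
          (fun i (_ : i ∈ Finset.univ) => sq_nonneg (xR i))).mp h0 b (Finset.mem_univ b)
        exact (pow_eq_zero_iff two_ne_zero).mp this
      have hT0 : T = 0 := by
        rw [hT]
        refine Finset.sum_eq_zero fun a _ => Finset.sum_eq_zero fun b _ => ?_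
        rw [hx0 b, mul_zero]; simp
      rw [hEwT, hT0, zero_div, abs_zero, ← hV2z, mul_zero, Real.sqrt_zero, mul_zero]
  · -- Var₁ = 0
    have hx0 : ∀ a : Fin n, xL a = 0 := by
      have h0 : ∑ a, xL a ^ 2 = 0 := by rw [hsqL, ← hV1z, mul_zero]
      intro a
      have := (Finset.sum_eq_zero_iff_of_nonneg
        (fun i (_ : i ∈ Finset.univ) => sq_nonneg (xL i))).mp h0 a (Finset.mem_univ a)
      exact (pow_eq_zero_iff two_ne_zero).mp this
    have hT0 : T = 0 := by
      rw [hT]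
      refine Finset.sum_eq_zero fun a _ => Finset.sum_eq_zero fun b _ => ?_
      rw [hx0 a, zero_mul]; simp
    rw [hEwT, hT0, zero_div, abs_zero, ← hV1z, zero_mul, Real.sqrt_zero, mul_zero]
end

section
/- Let θ, δ > 0, let 0 ≤ γ < 1, and let σ, τ ∈ (0,1] satisfy max{θσ, δτ} ≤ (1−γ)στ + γ√(στ). Then σ ≥ (δ − γ·√(δ/θ)) / (1 − γ). (If σ/τ ≤ δ/θ this follows from the inequality δτ ≤ (1−γ)στ + γ√(στ); if σ/τ > δ/θ it follows by symmetry, via τ ≥ (θ − γ√(θ/δ))/(1−γ) and σ > (δ/θ)·τ.) -/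
/-- Arithmetic core of the minimum-distance bound. -/
theorem stmt_8 (θ δ γ σ τ : ℝ) (hθ : 0 < θ) (hδ : 0 < δ)
    (hγ0 : 0 ≤ γ) (hγ1 : γ < 1)
    (hσ0 : 0 < σ) (hσ1 : σ ≤ 1) (hτ0 : 0 < τ) (hτ1 : τ ≤ 1)
    (h : max (θ * σ) (δ * τ) ≤ (1 - γ) * σ * τ + γ * Real.sqrt (σ * τ)) :
    (δ - γ * Real.sqrt (δ / θ)) / (1 - γ) ≤ σ := by
  have hθσ := le_trans (le_max_left (θ * σ) (δ * τ)) h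
  have hδτ := le_trans (le_max_right (θ * σ) (δ * τ)) h
  have hγ' : (0:ℝ) < 1 - γ := by linarith
  rw [div_le_iff₀ hγ']
  rcases le_or_gt (σ * θ) (δ * τ) with hc | hc
  · have key : Real.sqrt (σ * τ) ≤ Real.sqrt (δ / θ) * τ := by
      have heq : Real.sqrt (δ / θ) * τ = Real.sqrt (δ / θ * τ ^ 2) := by
        rw [Real.sqrt_mul (by positivity), Real.sqrt_sq hτ0.le]
      rw [heq]
      apply Real.sqrt_le_sqrt
      rw [div_mul_eq_mul_div, le_div_iff₀ hθ]
      nlinarith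
    have h2 := mul_le_mul_of_nonneg_left key hγ0
    nlinarith [mul_pos hτ0 hγ']
  · have key : Real.sqrt (σ * τ) ≤ Real.sqrt (θ / δ) * σ := by
      have heq : Real.sqrt (θ / δ) * σ = Real.sqrt (θ / δ * σ ^ 2) := by
        rw [Real.sqrt_mul (by positivity), Real.sqrt_sq hσ0.le]
      rw [heq]
      apply Real.sqrt_le_sqrt
      rw [div_mul_eq_mul_div, le_div_iff₀ hδ]
      nlinarith
    have h2 := mul_le_mul_of_nonneg_left key hγ0
    have hτlb : θ - γ * Real.sqrt (θ / δ) ≤ (1 - γ) * τ := by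
      nlinarith [mul_pos hσ0 hγ']
    have hid : δ / θ * Real.sqrt (θ / δ) = Real.sqrt (δ / θ) := by
      have hx : 0 < δ / θ := by positivity
      have hs : 0 < Real.sqrt (δ / θ) := Real.sqrt_pos.2 hx
      have hθδ : θ / δ = (δ / θ)⁻¹ := by field_simp
      rw [hθδ, Real.sqrt_inv]
      field_simp
      rw [Real.sq_sqrt hx.le]; field_simp
    have hσlb : δ / θ * τ < σ := by
      rw [div_mul_eq_mul_div, div_lt_iff₀ hθ]
      nlinarith
    have hfin : δ / θ * (θ - γ * Real.sqrt (θ / δ)) ≤ δ / θ * ((1 - γ) * τ) :=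
      mul_le_mul_of_nonneg_left hτlb (by positivity)
    have hδθ : δ / θ * θ = δ := by field_simp
    nlinarith [mul_le_mul_of_nonneg_left hσlb.le hγ'.le]
end

section
/- Let C = (G, C' : C'') be the graph code over F determined by a bipartite Δ-regular connected graph G = (V' : V'', E) with parts of size n > 1 and second-eigenvalue ratio γ = γ_G, where C' and C'' have minimum Hamming distances θΔ and δΔ. Let c be a nonzero codeword of C with support Y ⊆ E, let S ⊆ V' and T ⊆ V'' be the sets of endpoints of edges of Y in V' and V'', and set σ = |S|/n, τ = |T|/n. Then max{θσ, δτ} ≤ (1−γ)στ + γ√(στ). -/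
open Matrix BigOperators


private lemma sqrt_amgm_aux {σ τ : ℝ} (hσ0 : 0 ≤ σ) (hσ1 : σ ≤ 1) (hτ0 : 0 ≤ τ) (hτ1 : τ ≤ 1) :
    Real.sqrt (σ * (1 - σ)) * Real.sqrt (τ * (1 - τ)) ≤ Real.sqrt (σ * τ) - σ * τ := by
  have h1σ : (0:ℝ) ≤ 1 - σ := by linarith
  have h1τ : (0:ℝ) ≤ 1 - τ := by linarith
  have e1 : Real.sqrt (σ * (1 - σ)) * Real.sqrt (τ * (1 - τ))
      = Real.sqrt (σ * τ) * Real.sqrt ((1 - σ) * (1 - τ)) := by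
    rw [Real.sqrt_mul hσ0, Real.sqrt_mul hτ0, Real.sqrt_mul hσ0, Real.sqrt_mul h1σ]
    ring
  have hsq : Real.sqrt σ * Real.sqrt τ = Real.sqrt (σ * τ) := (Real.sqrt_mul hσ0 τ).symm
  have h2 : Real.sqrt ((1 - σ) * (1 - τ)) ≤ 1 - Real.sqrt (σ * τ) := by
    have hAM : 2 * (Real.sqrt σ * Real.sqrt τ) ≤ σ + τ := by
      nlinarith [sq_nonneg (Real.sqrt σ - Real.sqrt τ), Real.sq_sqrt hσ0, Real.sq_sqrt hτ0]
    have hle : (1 - σ) * (1 - τ) ≤ (1 - Real.sqrt (σ * τ))^2 := by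
      have := Real.sq_sqrt (mul_nonneg hσ0 hτ0)
      nlinarith [hAM, hsq]
    have hst1 : Real.sqrt (σ * τ) ≤ 1 := by
      rw [show (1:ℝ) = Real.sqrt 1 by simp]
      exact Real.sqrt_le_sqrt (by nlinarith)
    calc Real.sqrt ((1 - σ) * (1 - τ)) ≤ Real.sqrt ((1 - Real.sqrt (σ * τ))^2) :=
          Real.sqrt_le_sqrt hle
      _ = 1 - Real.sqrt (σ * τ) := Real.sqrt_sq (by linarith)
  have hs0 : 0 ≤ Real.sqrt (σ * τ) := Real.sqrt_nonneg _
  calc Real.sqrt (σ * (1 - σ)) * Real.sqrt (τ * (1 - τ))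
      = Real.sqrt (σ * τ) * Real.sqrt ((1 - σ) * (1 - τ)) := e1
    _ ≤ Real.sqrt (σ * τ) * (1 - Real.sqrt (σ * τ)) := mul_le_mul_of_nonneg_left h2 hs0
    _ = Real.sqrt (σ * τ) - Real.sqrt (σ * τ) * Real.sqrt (σ * τ) := by ring
    _ = Real.sqrt (σ * τ) - σ * τ := by
        rw [Real.mul_self_sqrt (mul_nonneg hσ0 hτ0)]

private lemma rayleigh_aux (n Δ : ℕ) (X : Matrix (Fin n) (Fin n) ℝ) (γ : ℝ)
    (hub : ∀ x : (Fin n ⊕ Fin n) → ℝ, x ≠ 0 → (x ⬝ᵥ (fun _ => 1)) = 0 →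
      x ⬝ᵥ ((Matrix.fromBlocks 0 X Xᵀ 0).mulVec x) ≤ γ * Δ * (x ⬝ᵥ x))
    (hγΔ : 0 ≤ γ * (Δ : ℝ))
    (f g : Fin n → ℝ) (hf : ∑ u, f u = 0) (hg : ∑ v, g v = 0) :
    f ⬝ᵥ X.mulVec g ≤ γ * Δ * (Real.sqrt (f ⬝ᵥ f) * Real.sqrt (g ⬝ᵥ g)) := by
  by_cases hf0 : f = 0
  · subst hf0
    rw [zero_dotProduct]
    positivity
  by_cases hg0 : g = 0
  · subst hg0
    rw [Matrix.mulVec_zero, dotProduct_zero]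
    positivity
  have hffpos : 0 < f ⬝ᵥ f := by
    rcases lt_or_eq_of_le (Finset.sum_nonneg fun i _ => mul_self_nonneg (f i)) with h | h
    · exact h
    · exact absurd (dotProduct_self_eq_zero.mp h.symm) hf0
  have hggpos : 0 < g ⬝ᵥ g := by
    rcases lt_or_eq_of_le (Finset.sum_nonneg fun i _ => mul_self_nonneg (g i)) with h | h
    · exact h
    · exact absurd (dotProduct_self_eq_zero.mp h.symm) hg0
  set a := Real.sqrt (f ⬝ᵥ f) with ha_def
  set b := Real.sqrt (g ⬝ᵥ g) with hb_def
  have ha : 0 < a := Real.sqrt_pos.mpr hffpos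
  have hb : 0 < b := Real.sqrt_pos.mpr hggpos
  have ha2 : a ^ 2 = f ⬝ᵥ f := Real.sq_sqrt hffpos.le
  have hb2 : b ^ 2 = g ⬝ᵥ g := Real.sq_sqrt hggpos.le
  set t := a / b with ht_def
  have ht : 0 < t := div_pos ha hb
  set x : (Fin n ⊕ Fin n) → ℝ := Sum.elim f (t • g) with hx_def
  have hx0 : x ≠ 0 := by
    intro h
    apply hf0
    funext u
    have := congrFun h (Sum.inl u)
    simpa [hx_def] using this
  have hx1 : (x ⬝ᵥ (fun _ => 1)) = 0 := by
    simp [hx_def, dotProduct, Fintype.sum_sum_type, smul_eq_mul, mul_assoc,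
      ← Finset.mul_sum, hf, hg]
  have hswap : (t • g) ⬝ᵥ (Xᵀ.mulVec f) = t * (f ⬝ᵥ X.mulVec g) := by
    rw [smul_dotProduct, Matrix.dotProduct_mulVec, Matrix.vecMul_transpose,
      dotProduct_comm]
    simp [smul_eq_mul]
  have hAx : x ⬝ᵥ ((Matrix.fromBlocks 0 X Xᵀ 0).mulVec x) = 2 * t * (f ⬝ᵥ X.mulVec g) := by
    rw [hx_def, Matrix.fromBlocks_mulVec, sumElim_dotProduct_sumElim]
    simp only [Sum.elim_comp_inl, Sum.elim_comp_inr]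
    rw [Matrix.zero_mulVec, Matrix.zero_mulVec, zero_add, add_zero]
    rw [Matrix.mulVec_smul, dotProduct_smul, hswap]
    simp [smul_eq_mul]; ring
  have hxx : x ⬝ᵥ x = f ⬝ᵥ f + t ^ 2 * (g ⬝ᵥ g) := by
    rw [hx_def, sumElim_dotProduct_sumElim, smul_dotProduct,
      dotProduct_smul]
    simp [smul_eq_mul]; ring
  have key := hub x hx0 hx1
  rw [hAx, hxx] at key
  have htb : t ^ 2 * (g ⬝ᵥ g) = a ^ 2 := by
    rw [← hb2, ht_def]; field_simp
  rw [htb, ← ha2] at key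
  have habt : a * b * t = a ^ 2 := by rw [ht_def]; field_simp
  nlinarith [key, mul_pos ha hb, ht]

/-- Mixing inequality satisfied by the support of a nonzero graph-code word.
The bipartite `Δ`-regular connected graph `G = (V' : V'', E)` with parts of size `n > 1` is
modelled by an edge type `E`, endpoint maps `l, r : E → Fin n`, and for each vertex an ordering
of its `Δ` incident edges.  `X` is the biadjacency matrix of `G` and `γ * Δ` is the second
largest eigenvalue of the adjacency matrix `fromBlocks 0 X Xᵀ 0` (Courant–Fischer
characterization over the orthogonal complement of the all-one vector).  `C'` and `C''` have
minimum Hamming distances (at least) `θΔ` and `δΔ`.  For a nonzero codeword `c` of the graph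
code with support `Y`, and `σ = |S|/n`, `τ = |T|/n` the normalized endpoint sets,
`max{θσ, δτ} ≤ (1−γ)στ + γ√(στ)`. -/
theorem stmt_10 (n Δ : ℕ) (hn : 1 < n) (hΔ : 0 < Δ)
    (E : Type) [Fintype E] [DecidableEq E]
    (l r : E → Fin n)
    (eL : Fin n → Fin Δ → E) (eR : Fin n → Fin Δ → E)
    (heLinj : ∀ u, Function.Injective (eL u))
    (heLend : ∀ u i, l (eL u i) = u)
    (heLsurj : ∀ e, ∃ i, eL (l e) i = e)
    (heRinj : ∀ v, Function.Injective (eR v))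
    (heRend : ∀ v j, r (eR v j) = v)
    (heRsurj : ∀ e, ∃ j, eR (r e) j = e)
    (hsimple : ∀ e e', l e = l e' → r e = r e' → e = e')
    (hconn : (SimpleGraph.fromRel (fun a b : Fin n ⊕ Fin n =>
        ∃ e : E, a = Sum.inl (l e) ∧ b = Sum.inr (r e))).Connected)
    (X : Matrix (Fin n) (Fin n) ℝ)
    (hX : ∀ u v : Fin n, X u v = if ∃ e, l e = u ∧ r e = v then 1 else 0)
    (γ : ℝ)
    (hγ : IsGreatest {ρ : ℝ | ∃ x : (Fin n ⊕ Fin n) → ℝ, x ≠ 0 ∧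
        (x ⬝ᵥ (fun _ => 1)) = 0 ∧
        x ⬝ᵥ ((Matrix.fromBlocks 0 X Xᵀ 0).mulVec x) = ρ * (x ⬝ᵥ x)} (γ * Δ))
    (F : Type) [Field F] [Fintype F] [DecidableEq F]
    (C' C'' : Submodule F (Fin Δ → F))
    (θ δ : ℝ)
    (hC'dist : ∀ x : Fin Δ → F, x ∈ C' → x ≠ 0 → θ * Δ ≤ (hammingNorm x : ℝ))
    (hC''dist : ∀ x : Fin Δ → F, x ∈ C'' → x ≠ 0 → δ * Δ ≤ (hammingNorm x : ℝ))
    (c : E → F)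
    (hcL : ∀ u, (fun i => c (eL u i)) ∈ C')
    (hcR : ∀ v, (fun j => c (eR v j)) ∈ C'')
    (hc0 : c ≠ 0)
    (Y : Finset E) (hY : Y = Finset.univ.filter (fun e => c e ≠ 0))
    (S : Finset (Fin n)) (hS : S = Y.image l)
    (T : Finset (Fin n)) (hT : T = Y.image r)
    (σ τ : ℝ) (hσ : σ = (S.card : ℝ) / n) (hτ : τ = (T.card : ℝ) / n) :
    max (θ * σ) (δ * τ) ≤ (1 - γ) * σ * τ + γ * Real.sqrt (σ * τ) := by

  haveI : NeZero n := ⟨by omega⟩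
  have hn0 : (0:ℝ) < n := by positivity
  have hn' : (n : ℝ) ≠ 0 := hn0.ne'
  -- the spectral upper bound and nonnegativity of γΔ
  have hγΔ0 : 0 ≤ γ * (Δ : ℝ) := by
    have h01 : (0 : Fin n) ≠ 1 := by
      intro h
      have := congrArg Fin.val h
      simp [Fin.val_one'] at this
      omega
    set f0 : Fin n → ℝ := fun u => (if u = 0 then 1 else 0) - (if u = 1 then 1 else 0) with hf0def
    set x0 : (Fin n ⊕ Fin n) → ℝ := Sum.elim f0 0 with hx0def
    have hx0ne : x0 ≠ 0 := by
      intro h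
      have := congrFun h (Sum.inl 0)
      simp [hx0def, hf0def, h01] at this
    have hx0one : (x0 ⬝ᵥ (fun _ => 1)) = 0 := by
      simp [hx0def, hf0def, dotProduct, Fintype.sum_sum_type, Finset.sum_sub_distrib,
        Finset.sum_ite_eq', h01]
    have hx0A : x0 ⬝ᵥ ((Matrix.fromBlocks 0 X Xᵀ 0).mulVec x0) = 0 * (x0 ⬝ᵥ x0) := by
      rw [hx0def, Matrix.fromBlocks_mulVec, sumElim_dotProduct_sumElim]
      simp only [Sum.elim_comp_inl, Sum.elim_comp_inr]
      simp [Matrix.mulVec_zero, Matrix.zero_mulVec]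
    exact hγ.2 ⟨x0, hx0ne, hx0one, hx0A⟩
  have hub : ∀ x : (Fin n ⊕ Fin n) → ℝ, x ≠ 0 → (x ⬝ᵥ (fun _ => 1)) = 0 →
      x ⬝ᵥ ((Matrix.fromBlocks 0 X Xᵀ 0).mulVec x) ≤ γ * Δ * (x ⬝ᵥ x) := by
    intro x hx hx1
    have hxxnn : 0 ≤ x ⬝ᵥ x := Finset.sum_nonneg fun i _ => mul_self_nonneg (x i)
    have hxx : 0 < x ⬝ᵥ x := by
      rcases lt_or_eq_of_le hxxnn with h | h
      · exact h
      · exact absurd (dotProduct_self_eq_zero.mp h.symm) hx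
    have hmem := hγ.2 ⟨x, hx, hx1,
      (div_mul_cancel₀ (x ⬝ᵥ ((Matrix.fromBlocks 0 X Xᵀ 0).mulVec x)) hxx.ne').symm⟩
    calc x ⬝ᵥ ((Matrix.fromBlocks 0 X Xᵀ 0).mulVec x)
        = (x ⬝ᵥ ((Matrix.fromBlocks 0 X Xᵀ 0).mulVec x)) / (x ⬝ᵥ x) * (x ⬝ᵥ x) :=
          (div_mul_cancel₀ _ hxx.ne').symm
      _ ≤ γ * Δ * (x ⬝ᵥ x) := mul_le_mul_of_nonneg_right hmem hxxnn
  -- row and column sums of X are Δ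
  have hrow : ∀ u, ∑ v, X u v = (Δ : ℝ) := by
    intro u
    have himg : (Finset.univ.filter (fun v => ∃ e, l e = u ∧ r e = v))
        = Finset.univ.image (fun i : Fin Δ => r (eL u i)) := by
      ext v
      simp only [Finset.mem_filter, Finset.mem_image, Finset.mem_univ, true_and]
      constructor
      · rintro ⟨e, he1, he2⟩
        obtain ⟨i, hi⟩ := heLsurj e
        rw [he1] at hi
        exact ⟨i, by rw [hi, he2]⟩
      · rintro ⟨i, rfl⟩
        exact ⟨eL u i, heLend u i, rfl⟩
    have hinj : Function.Injective (fun i : Fin Δ => r (eL u i)) := by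
      intro i j hij
      exact heLinj u (hsimple _ _ (by rw [heLend, heLend]) hij)
    calc ∑ v, X u v = ∑ v, if ∃ e, l e = u ∧ r e = v then (1:ℝ) else 0 := by
          simp only [hX]
      _ = ((Finset.univ.filter (fun v => ∃ e, l e = u ∧ r e = v)).card : ℝ) := by
          rw [Finset.sum_boole]
      _ = (Δ : ℝ) := by
          rw [himg, Finset.card_image_of_injective _ hinj]
          simp
  have hcol : ∀ v, ∑ u, X u v = (Δ : ℝ) := by
    intro v
    have himg : (Finset.univ.filter (fun u => ∃ e, l e = u ∧ r e = v))
        = Finset.univ.image (fun j : Fin Δ => l (eR v j)) := by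
      ext u
      simp only [Finset.mem_filter, Finset.mem_image, Finset.mem_univ, true_and]
      constructor
      · rintro ⟨e, he1, he2⟩
        obtain ⟨j, hj⟩ := heRsurj e
        rw [he2] at hj
        exact ⟨j, by rw [hj, he1]⟩
      · rintro ⟨j, rfl⟩
        exact ⟨eR v j, rfl, heRend v j⟩
    have hinj : Function.Injective (fun j : Fin Δ => l (eR v j)) := by
      intro i j hij
      exact heRinj v (hsimple _ _ hij (by rw [heRend, heRend]))
    calc ∑ u, X u v = ∑ u, if ∃ e, l e = u ∧ r e = v then (1:ℝ) else 0 := by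
          simp only [hX]
      _ = ((Finset.univ.filter (fun u => ∃ e, l e = u ∧ r e = v)).card : ℝ) := by
          rw [Finset.sum_boole]
      _ = (Δ : ℝ) := by
          rw [himg, Finset.card_image_of_injective _ hinj]
          simp
  -- |Y| counted via left endpoints
  have hYL : Y.card = ∑ u : Fin n, (Finset.univ.filter (fun i : Fin Δ => c (eL u i) ≠ 0)).card := by
    have hinj : Function.Injective (fun p : Fin n × Fin Δ => eL p.1 p.2) := by
      rintro ⟨u, i⟩ ⟨u', i'⟩ h
      simp only at h
      have hu : u = u' := by rw [← heLend u i, ← heLend u' i', h]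
      subst hu
      exact Prod.ext rfl (heLinj u h)
    have himg : Y = (Finset.univ.filter (fun p : Fin n × Fin Δ => c (eL p.1 p.2) ≠ 0)).image
        (fun p : Fin n × Fin Δ => eL p.1 p.2) := by
      ext e
      simp only [hY, Finset.mem_filter, Finset.mem_image, Finset.mem_univ, true_and]
      constructor
      · intro he
        obtain ⟨i, hi⟩ := heLsurj e
        exact ⟨(l e, i), by rw [hi]; exact he, hi⟩
      · rintro ⟨⟨u, i⟩, hp, rfl⟩
        exact hp
    rw [himg, Finset.card_image_of_injective _ hinj, Finset.card_filter, Fintype.sum_prod_type]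
    simp [Finset.card_filter]
  -- |Y| counted via right endpoints
  have hYR : Y.card = ∑ v : Fin n, (Finset.univ.filter (fun j : Fin Δ => c (eR v j) ≠ 0)).card := by
    have hinj : Function.Injective (fun p : Fin n × Fin Δ => eR p.1 p.2) := by
      rintro ⟨v, j⟩ ⟨v', j'⟩ h
      simp only at h
      have hv : v = v' := by rw [← heRend v j, ← heRend v' j', h]
      subst hv
      exact Prod.ext rfl (heRinj v h)
    have himg : Y = (Finset.univ.filter (fun p : Fin n × Fin Δ => c (eR p.1 p.2) ≠ 0)).image
        (fun p : Fin n × Fin Δ => eR p.1 p.2) := by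
      ext e
      simp only [hY, Finset.mem_filter, Finset.mem_image, Finset.mem_univ, true_and]
      constructor
      · intro he
        obtain ⟨j, hj⟩ := heRsurj e
        exact ⟨(r e, j), by rw [hj]; exact he, hj⟩
      · rintro ⟨⟨v, j⟩, hp, rfl⟩
        exact hp
    rw [himg, Finset.card_image_of_injective _ hinj, Finset.card_filter, Fintype.sum_prod_type]
    simp [Finset.card_filter]
  -- minimum-distance lower bounds
  have hθcard : θ * Δ * S.card ≤ (Y.card : ℝ) := by
    have hterm : ∀ u ∈ S, θ * Δ ≤
        (((Finset.univ.filter (fun i : Fin Δ => c (eL u i) ≠ 0)).card : ℕ) : ℝ) := by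
      intro u hu
      rw [hS, Finset.mem_image] at hu
      obtain ⟨e, heY, hle⟩ := hu
      have hce : c e ≠ 0 := by
        rw [hY, Finset.mem_filter] at heY
        exact heY.2
      obtain ⟨i, hi⟩ := heLsurj e
      rw [hle] at hi
      have hwne : (fun i => c (eL u i)) ≠ 0 := by
        intro h0
        apply hce
        rw [← hi]
        exact congrFun h0 i
      have := hC'dist _ (hcL u) hwne
      have heq : hammingNorm (fun i => c (eL u i))
          = (Finset.univ.filter (fun i : Fin Δ => c (eL u i) ≠ 0)).card := rfl
      rw [heq] at this
      exact this
    calc θ * Δ * S.card = ∑ _u ∈ S, θ * Δ := by rw [Finset.sum_const, nsmul_eq_mul]; ring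
      _ ≤ ∑ u ∈ S, (((Finset.univ.filter (fun i : Fin Δ => c (eL u i) ≠ 0)).card : ℕ) : ℝ) :=
          Finset.sum_le_sum hterm
      _ ≤ ∑ u : Fin n, (((Finset.univ.filter (fun i : Fin Δ => c (eL u i) ≠ 0)).card : ℕ) : ℝ) :=
          Finset.sum_le_sum_of_subset_of_nonneg (Finset.subset_univ S)
            (fun u _ _ => Nat.cast_nonneg _)
      _ = (Y.card : ℝ) := by rw [hYL]; push_cast; ring
  have hδcard : δ * Δ * T.card ≤ (Y.card : ℝ) := by
    have hterm : ∀ v ∈ T, δ * Δ ≤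
        (((Finset.univ.filter (fun j : Fin Δ => c (eR v j) ≠ 0)).card : ℕ) : ℝ) := by
      intro v hv
      rw [hT, Finset.mem_image] at hv
      obtain ⟨e, heY, hre⟩ := hv
      have hce : c e ≠ 0 := by
        rw [hY, Finset.mem_filter] at heY
        exact heY.2
      obtain ⟨j, hj⟩ := heRsurj e
      rw [hre] at hj
      have hwne : (fun j => c (eR v j)) ≠ 0 := by
        intro h0
        apply hce
        rw [← hj]
        exact congrFun h0 j
      have := hC''dist _ (hcR v) hwne
      have heq : hammingNorm (fun j => c (eR v j))
          = (Finset.univ.filter (fun j : Fin Δ => c (eR v j) ≠ 0)).card := rfl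
      rw [heq] at this
      exact this
    calc δ * Δ * T.card = ∑ _v ∈ T, δ * Δ := by rw [Finset.sum_const, nsmul_eq_mul]; ring
      _ ≤ ∑ v ∈ T, (((Finset.univ.filter (fun j : Fin Δ => c (eR v j) ≠ 0)).card : ℕ) : ℝ) :=
          Finset.sum_le_sum hterm
      _ ≤ ∑ v : Fin n, (((Finset.univ.filter (fun j : Fin Δ => c (eR v j) ≠ 0)).card : ℕ) : ℝ) :=
          Finset.sum_le_sum_of_subset_of_nonneg (Finset.subset_univ T)
            (fun v _ _ => Nat.cast_nonneg _)
      _ = (Y.card : ℝ) := by rw [hYR]; push_cast; ring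
  -- |Y| is at most the number of (S,T) pairs joined by an edge
  have hYA : (Y.card : ℝ) ≤ ∑ u ∈ S, ∑ v ∈ T, X u v := by
    have hsum : ∑ u ∈ S, ∑ v ∈ T, X u v
        = (((S ×ˢ T).filter (fun p => ∃ e, l e = p.1 ∧ r e = p.2)).card : ℝ) := by
      rw [← Finset.sum_boole, Finset.sum_product]
      exact Finset.sum_congr rfl fun u _ => Finset.sum_congr rfl fun v _ => hX u v
    rw [hsum]
    norm_cast
    apply Finset.card_le_card_of_injOn (fun e => (l e, r e))
    · intro e he
      simp only [Finset.mem_coe, Finset.mem_filter, Finset.mem_product]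
      refine ⟨⟨?_, ?_⟩, e, rfl, rfl⟩
      · rw [hS]; exact Finset.mem_image_of_mem l he
      · rw [hT]; exact Finset.mem_image_of_mem r he
    · intro e _ e' _ h
      exact hsimple e e' (congrArg Prod.fst h) (congrArg Prod.snd h)
  -- expander mixing
  set f : Fin n → ℝ := fun u => (if u ∈ S then 1 else 0) - σ with hfdef
  set g : Fin n → ℝ := fun v => (if v ∈ T then 1 else 0) - τ with hgdef
  have hs : (S.card : ℝ) = σ * n := by rw [hσ]; field_simp
  have ht : (T.card : ℝ) = τ * n := by rw [hτ, div_mul_cancel₀ _ hn']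
  have hSsum : ∑ u, (if u ∈ S then (1:ℝ) else 0) = S.card := by simp
  have hTsum : ∑ v, (if v ∈ T then (1:ℝ) else 0) = T.card := by simp
  have hfsum : ∑ u, f u = 0 := by
    simp only [hfdef, Finset.sum_sub_distrib, hSsum, Finset.sum_const, Finset.card_univ,
      Fintype.card_fin, nsmul_eq_mul, hs]
    ring
  have hgsum : ∑ v, g v = 0 := by
    simp only [hgdef, Finset.sum_sub_distrib, hTsum, Finset.sum_const, Finset.card_univ,
      Fintype.card_fin, nsmul_eq_mul, ht]
    ring
  have hff : f ⬝ᵥ f = n * (σ * (1 - σ)) := by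
    have hpt : ∀ u, f u * f u = (1 - 2*σ) * (if u ∈ S then (1:ℝ) else 0) + σ^2 := by
      intro u; by_cases h : u ∈ S <;> simp [hfdef, h] <;> ring
    calc f ⬝ᵥ f = ∑ u, ((1 - 2*σ) * (if u ∈ S then (1:ℝ) else 0) + σ^2) := by
          simp only [dotProduct]
          exact Finset.sum_congr rfl fun u _ => hpt u
      _ = (1 - 2*σ) * (S.card : ℝ) + n * σ^2 := by
          rw [Finset.sum_add_distrib, ← Finset.mul_sum, hSsum, Finset.sum_const,
            Finset.card_univ, Fintype.card_fin, nsmul_eq_mul]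
      _ = n * (σ * (1 - σ)) := by rw [hs]; ring
  have hgg : g ⬝ᵥ g = n * (τ * (1 - τ)) := by
    have hpt : ∀ v, g v * g v = (1 - 2*τ) * (if v ∈ T then (1:ℝ) else 0) + τ^2 := by
      intro v; by_cases h : v ∈ T <;> simp [hgdef, h] <;> ring
    calc g ⬝ᵥ g = ∑ v, ((1 - 2*τ) * (if v ∈ T then (1:ℝ) else 0) + τ^2) := by
          simp only [dotProduct]
          exact Finset.sum_congr rfl fun v _ => hpt v
      _ = (1 - 2*τ) * (T.card : ℝ) + n * τ^2 := by
          rw [Finset.sum_add_distrib, ← Finset.mul_sum, hTsum, Finset.sum_const,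
            Finset.card_univ, Fintype.card_fin, nsmul_eq_mul]
      _ = n * (τ * (1 - τ)) := by rw [ht]; ring
  have hA : ∑ u ∈ S, ∑ v ∈ T, X u v = f ⬝ᵥ X.mulVec g + Δ * n * (σ * τ) := by
    have hpt : ∀ u v, f u * (X u v * g v) =
        (if u ∈ S then 1 else 0) * X u v * (if v ∈ T then 1 else 0)
          - σ * (X u v * (if v ∈ T then 1 else 0))
          - τ * ((if u ∈ S then (1:ℝ) else 0) * X u v)
          + σ * τ * X u v := by
      intro u v; simp only [hfdef, hgdef]; ring
    have e0 : f ⬝ᵥ X.mulVec g = ∑ u, ∑ v, f u * (X u v * g v) := by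
      simp only [dotProduct, Matrix.mulVec, Finset.mul_sum]
    have e1 : ∑ u, ∑ v, (if u ∈ S then 1 else 0) * X u v * (if v ∈ T then (1:ℝ) else 0)
        = ∑ u ∈ S, ∑ v ∈ T, X u v := by
      have hT' : ∀ u, ∑ v, (if u ∈ S then (1:ℝ) else 0) * X u v * (if v ∈ T then 1 else 0)
          = (if u ∈ S then (1:ℝ) else 0) * ∑ v ∈ T, X u v := by
        intro u
        calc ∑ v, (if u ∈ S then (1:ℝ) else 0) * X u v * (if v ∈ T then 1 else 0)
            = ∑ v, if v ∈ T then (if u ∈ S then (1:ℝ) else 0) * X u v else 0 :=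
              Finset.sum_congr rfl fun v _ => by by_cases h' : v ∈ T <;> simp [h']
          _ = ∑ v ∈ Finset.univ ∩ T, (if u ∈ S then (1:ℝ) else 0) * X u v :=
              Finset.sum_ite_mem _ _ _
          _ = (if u ∈ S then (1:ℝ) else 0) * ∑ v ∈ T, X u v := by
              rw [Finset.univ_inter, Finset.mul_sum]
      rw [Finset.sum_congr rfl fun u _ => hT' u]
      calc ∑ u, (if u ∈ S then (1:ℝ) else 0) * ∑ v ∈ T, X u v
          = ∑ u, if u ∈ S then (∑ v ∈ T, X u v) else 0 :=
            Finset.sum_congr rfl fun u _ => by by_cases h : u ∈ S <;> simp [h]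
        _ = ∑ u ∈ Finset.univ ∩ S, ∑ v ∈ T, X u v := Finset.sum_ite_mem _ _ _
        _ = ∑ u ∈ S, ∑ v ∈ T, X u v := by rw [Finset.univ_inter]
    have e2 : ∑ u, ∑ v, X u v * (if v ∈ T then (1:ℝ) else 0) = Δ * (τ * n) := by
      rw [Finset.sum_comm]
      have hw : ∀ v, ∑ u, X u v * (if v ∈ T then (1:ℝ) else 0)
          = (Δ : ℝ) * (if v ∈ T then (1:ℝ) else 0) := by
        intro v
        rw [← Finset.sum_mul, hcol]
      rw [Finset.sum_congr rfl fun v _ => hw v, ← Finset.mul_sum, hTsum, ht]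
    have e3 : ∑ u, (if u ∈ S then (1:ℝ) else 0) * ∑ v, X u v = Δ * (σ * n) := by
      have hw : ∀ u, (if u ∈ S then (1:ℝ) else 0) * ∑ v, X u v
          = (if u ∈ S then (1:ℝ) else 0) * Δ := by
        intro u
        rw [hrow]
      rw [Finset.sum_congr rfl fun u _ => hw u, ← Finset.sum_mul, hSsum, hs]
      ring
    have e4 : ∑ u : Fin n, ∑ v, X u v = Δ * n := by
      rw [Finset.sum_congr rfl fun u _ => hrow u, Finset.sum_const, Finset.card_univ,
        Fintype.card_fin, nsmul_eq_mul]
      ring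
    have expand : f ⬝ᵥ X.mulVec g
        = (∑ u ∈ S, ∑ v ∈ T, X u v) - σ * (Δ * (τ * n)) - τ * (Δ * (σ * n))
          + σ * τ * (Δ * n) := by
      rw [e0]
      rw [Finset.sum_congr rfl fun u _ => Finset.sum_congr rfl fun v _ => hpt u v]
      simp only [Finset.sum_add_distrib, Finset.sum_sub_distrib, ← Finset.mul_sum]
      rw [e1, e2, e3, e4]
    rw [expand]
    ring
  -- bounds on σ and τ
  have hσ0 : 0 ≤ σ := by rw [hσ]; exact div_nonneg (Nat.cast_nonneg _) hn0.le
  have hτ0 : 0 ≤ τ := by rw [hτ]; exact div_nonneg (Nat.cast_nonneg _) hn0.le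
  have hσ1 : σ ≤ 1 := by
    rw [hσ, div_le_one hn0]
    exact_mod_cast (Finset.card_le_univ S).trans_eq (by simp)
  have hτ1 : τ ≤ 1 := by
    rw [hτ, div_le_one hn0]
    exact_mod_cast (Finset.card_le_univ T).trans_eq (by simp)
  -- Rayleigh bound on f X g
  have hray := rayleigh_aux n Δ X γ hub hγΔ0 f g hfsum hgsum
  have hsqrt : Real.sqrt (f ⬝ᵥ f) * Real.sqrt (g ⬝ᵥ g)
      ≤ n * (Real.sqrt (σ * τ) - σ * τ) := by
    rw [hff, hgg, Real.sqrt_mul (by positivity : (0:ℝ) ≤ (n:ℝ)),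
      Real.sqrt_mul (by positivity : (0:ℝ) ≤ (n:ℝ))]
    calc Real.sqrt n * Real.sqrt (σ * (1 - σ)) * (Real.sqrt n * Real.sqrt (τ * (1 - τ)))
        = (Real.sqrt n * Real.sqrt n) * (Real.sqrt (σ * (1 - σ)) * Real.sqrt (τ * (1 - τ))) := by
          ring
      _ = n * (Real.sqrt (σ * (1 - σ)) * Real.sqrt (τ * (1 - τ))) := by
          rw [Real.mul_self_sqrt (by positivity : (0:ℝ) ≤ (n:ℝ))]
      _ ≤ n * (Real.sqrt (σ * τ) - σ * τ) :=
          mul_le_mul_of_nonneg_left (sqrt_amgm_aux hσ0 hσ1 hτ0 hτ1) (by positivity)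
  have hAle : ∑ u ∈ S, ∑ v ∈ T, X u v
      ≤ Δ * n * ((1 - γ) * σ * τ + γ * Real.sqrt (σ * τ)) := by
    have h1 : f ⬝ᵥ X.mulVec g ≤ γ * Δ * (n * (Real.sqrt (σ * τ) - σ * τ)) :=
      hray.trans (mul_le_mul_of_nonneg_left hsqrt hγΔ0)
    have h2 : γ * Δ * (n * (Real.sqrt (σ * τ) - σ * τ)) + Δ * n * (σ * τ)
        = Δ * n * ((1 - γ) * σ * τ + γ * Real.sqrt (σ * τ)) := by ring
    rw [hA]
    linarith
  -- finish
  have hΔn : (0:ℝ) < (Δ : ℝ) * n := by positivity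
  rw [max_le_iff]
  constructor
  · have hchain : θ * Δ * (σ * n) ≤ Δ * n * ((1 - γ) * σ * τ + γ * Real.sqrt (σ * τ)) := by
      rw [← hs]
      exact hθcard.trans (hYA.trans hAle)
    have h' : (Δ : ℝ) * n * (θ * σ) ≤ (Δ : ℝ) * n *
        ((1 - γ) * σ * τ + γ * Real.sqrt (σ * τ)) := by
      calc (Δ : ℝ) * n * (θ * σ) = θ * Δ * (σ * n) := by ring
        _ ≤ _ := hchain
    exact le_of_mul_le_mul_left h' hΔn
  · have hchain : δ * Δ * (τ * n) ≤ Δ * n * ((1 - γ) * σ * τ + γ * Real.sqrt (σ * τ)) := by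
      rw [← ht]
      exact hδcard.trans (hYA.trans hAle)
    have h' : (Δ : ℝ) * n * (δ * τ) ≤ (Δ : ℝ) * n *
        ((1 - γ) * σ * τ + γ * Real.sqrt (σ * τ)) := by
      calc (Δ : ℝ) * n * (δ * τ) = δ * Δ * (τ * n) := by ring
        _ ≤ _ := hchain
    exact le_of_mul_le_mul_left h' hΔn
end

section
/- Let θ, δ, γ, σ be positive reals with γ < 1 and √(θδ) > 2γ, set β = ((δ/2) − γ·√(δ/θ)) / (1 − γ), and let (σ_i)_{i≥1} be a sequence of positive reals with σ_1 ≤ σ < β such that for every i ≥ 2: √(σ_{i−1}/σ_i) ≥ δ/(2γ) − ((1−γ)/γ)·σ_{i−1} when i is even, and √(σ_{i−1}/σ_i) ≥ θ/(2γ) − ((1−γ)/γ)·σ_{i−1} when i is odd. Then for every i ≥ 2: σ_{i−1}/σ_i ≥ δ/θ when i is even, and σ_{i−1}/σ_i ≥ θ/δ when i is odd; in particular σ_{i−2} ≥ σ_i for all i > 2, so σ_i ≤ σ for odd i and σ_i ≤ σ_2 for even i. -/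
/-- Inductive contraction claim in the iterative decoder analysis.
`σs i` is the fraction of erroneous vertices after iteration `i` (indices `i ≥ 1`). -/
theorem stmt_14 (θ δ γ σ β : ℝ) (hθ : 0 < θ) (hδ : 0 < δ) (hγ0 : 0 < γ) (hγ1 : γ < 1)
    (hθδγ : Real.sqrt (θ * δ) > 2 * γ)
    (hβ : β = (δ / 2 - γ * Real.sqrt (δ / θ)) / (1 - γ))
    (σs : ℕ → ℝ) (hpos : ∀ i, 1 ≤ i → 0 < σs i)
    (h1 : σs 1 ≤ σ) (hσβ : σ < β)
    (heven : ∀ i, 2 ≤ i → Even i →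
        δ / (2 * γ) - (1 - γ) / γ * σs (i - 1) ≤ Real.sqrt (σs (i - 1) / σs i))
    (hodd : ∀ i, 2 ≤ i → Odd i →
        θ / (2 * γ) - (1 - γ) / γ * σs (i - 1) ≤ Real.sqrt (σs (i - 1) / σs i)) :
    (∀ i, 2 ≤ i → Even i → δ / θ ≤ σs (i - 1) / σs i) ∧
    (∀ i, 2 ≤ i → Odd i → θ / δ ≤ σs (i - 1) / σs i) ∧
    (∀ i, 2 < i → σs i ≤ σs (i - 2)) ∧
    (∀ i, 1 ≤ i → Odd i → σs i ≤ σ) ∧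
    (∀ i, 2 ≤ i → Even i → σs i ≤ σs 2) := by
  have hsθ0 : 0 < Real.sqrt θ := Real.sqrt_pos.mpr hθ
  have hsδ0 : 0 < Real.sqrt δ := Real.sqrt_pos.mpr hδ
  set sθ := Real.sqrt θ with hsθdef
  set sδ := Real.sqrt δ with hsδdef
  have hθeq : sθ ^ 2 = θ := Real.sq_sqrt hθ.le
  have hδeq : sδ ^ 2 = δ := Real.sq_sqrt hδ.le
  have e1 : Real.sqrt (δ / θ) = sδ / sθ := Real.sqrt_div hδ.le θ
  have e2 : Real.sqrt (θ / δ) = sθ / sδ := Real.sqrt_div hθ.le δ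
  have e3 : Real.sqrt (θ * δ) = sθ * sδ := Real.sqrt_mul hθ.le δ
  have hγδ : 2 * γ < sθ * sδ := by rw [← e3]; exact hθδγ
  have h1γ : 0 < 1 - γ := by linarith
  have hb : (1 - γ) * β = δ / 2 - γ * (sδ / sθ) := by
    rw [hβ, e1]; field_simp
  have hbp : (1 - γ) * β * (2 * sθ) = δ * sθ - 2 * (γ * sδ) := by
    rw [hβ, e1]; field_simp
  have hβpos : 0 < β := by
    have hnum : γ * (sδ / sθ) < δ / 2 := by
      rw [mul_div_assoc' γ sδ sθ, div_lt_iff₀ hsθ0]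
      nlinarith [hδeq, hsδ0, hsθ0, hγδ]
    nlinarith [hb, h1γ]
  have hb2 : (1 - γ) * (β * θ / δ) = θ / 2 - γ * (sθ / sδ) := by
    have hθne : (θ:ℝ) ≠ 0 := hθ.ne'
    have hδne : (δ:ℝ) ≠ 0 := hδ.ne'
    have hsθne : sθ ≠ 0 := hsθ0.ne'
    have hsδne : sδ ≠ 0 := hsδ0.ne'
    field_simp
    linear_combination (sθ * sδ) * hbp + (δ * sδ - 2 * (1 - γ) * β * sδ) * hθeq +
      (-2 * γ * sθ) * hδeq
  -- from sqrt comparison to value comparison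
  have sqrtlt : ∀ c r : ℝ, 0 ≤ c → Real.sqrt c < Real.sqrt r → c < r := by
    intro c r hc h
    by_contra hcon
    push_neg at hcon
    exact absurd (Real.sqrt_le_sqrt hcon) (not_le.mpr h)
  -- key inequalities
  have evenKey : ∀ x : ℝ, x < β → Real.sqrt (δ / θ) < δ / (2 * γ) - (1 - γ) / γ * x := by
    intro x hx
    rw [e1, show δ / (2 * γ) - (1 - γ) / γ * x = (δ / 2 - (1 - γ) * x) / γ by ring,
      lt_div_iff₀ hγ0]
    have h2 := mul_lt_mul_of_pos_left hx h1γ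
    linarith [hb, mul_comm (sδ / sθ) γ]
  have oddKey : ∀ x : ℝ, x < β * θ / δ → Real.sqrt (θ / δ) < θ / (2 * γ) - (1 - γ) / γ * x := by
    intro x hx
    rw [e2, show θ / (2 * γ) - (1 - γ) / γ * x = (θ / 2 - (1 - γ) * x) / γ by ring,
      lt_div_iff₀ hγ0]
    have h2 := mul_lt_mul_of_pos_left hx h1γ
    linarith [hb2, mul_comm (sθ / sδ) γ]
  -- combined step conclusions
  have evenStep : ∀ i, 2 ≤ i → Even i → σs (i - 1) < β → δ / θ < σs (i - 1) / σs i := by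
    intro i hi2 hie hlt
    exact sqrtlt _ _ (by positivity) (lt_of_lt_of_le (evenKey _ hlt) (heven i hi2 hie))
  have oddStep : ∀ i, 2 ≤ i → Odd i → σs (i - 1) < β * θ / δ → θ / δ < σs (i - 1) / σs i := by
    intro i hi2 hio hlt
    exact sqrtlt _ _ (by positivity) (lt_of_lt_of_le (oddKey _ hlt) (hodd i hi2 hio))
  -- main bounds by induction
  have main : ∀ i, 1 ≤ i → (Odd i → σs i < β) ∧ (Even i → σs i < β * θ / δ) := by
    intro i hi
    induction i, hi using Nat.le_induction with
    | base =>
      refine ⟨fun _ => lt_of_le_of_lt h1 hσβ, fun h => (Nat.not_even_one h).elim⟩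
    | succ i hi ih =>
      have hy : 0 < σs (i + 1) := hpos (i + 1) (by omega)
      rcases Nat.even_or_odd i with hie | hio
      · -- i even, i+1 odd
        have hi2 : 2 ≤ i := by obtain ⟨k, hk⟩ := hie; omega
        have hbn : σs i < β * θ / δ := ih.2 hie
        have hr : θ / δ < σs i / σs (i + 1) := by
          have h := oddStep (i + 1) (by omega) (Even.add_one hie)
          simpa using h (by simpa using hbn)
        have hr' : θ / δ * σs (i + 1) < σs i := (lt_div_iff₀ hy).mp hr
        have hnext : σs (i + 1) < β := by
          have h6 : θ / δ * σs (i + 1) < β * θ / δ := lt_trans hr' hbn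
          have h7 := mul_lt_mul_of_pos_left h6 (by positivity : (0:ℝ) < δ / θ)
          have hc1 : δ / θ * (θ / δ * σs (i + 1)) = σs (i + 1) := by field_simp
          have hc2 : δ / θ * (β * θ / δ) = β := by field_simp
          linarith
        exact ⟨fun _ => hnext, fun h' => absurd hie (Nat.even_add_one.mp h')⟩
      · -- i odd, i+1 even
        have hbn : σs i < β := ih.1 hio
        have hr : δ / θ < σs i / σs (i + 1) := by
          have h := evenStep (i + 1) (by omega) (Odd.add_one hio)
          simpa using h (by simpa using hbn)
        have hr' : δ / θ * σs (i + 1) < σs i := (lt_div_iff₀ hy).mp hr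
        have hnext : σs (i + 1) < β * θ / δ := by
          have h6 : δ / θ * σs (i + 1) < β := lt_trans hr' hbn
          have h7 := mul_lt_mul_of_pos_left h6 (by positivity : (0:ℝ) < θ / δ)
          have hc1 : θ / δ * (δ / θ * σs (i + 1)) = σs (i + 1) := by field_simp
          have hc2 : θ / δ * β = β * θ / δ := by ring
          linarith
        refine ⟨fun h' => ?_, fun _ => hnext⟩
        obtain ⟨k, hk⟩ := hio
        obtain ⟨m, hm⟩ := h'
        omega
  -- part 1: even ratio
  have partA : ∀ i, 2 ≤ i → Even i → δ / θ ≤ σs (i - 1) / σs i := by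
    intro i hi2 hie
    have hodd1 : Odd (i - 1) := by obtain ⟨k, hk⟩ := hie; exact ⟨k - 1, by omega⟩
    exact le_of_lt (evenStep i hi2 hie ((main (i - 1) (by omega)).1 hodd1))
  -- part 2: odd ratio
  have partB : ∀ i, 2 ≤ i → Odd i → θ / δ ≤ σs (i - 1) / σs i := by
    intro i hi2 hio
    have heven1 : Even (i - 1) := by obtain ⟨k, hk⟩ := hio; exact ⟨k, by omega⟩
    exact le_of_lt (oddStep i hi2 hio ((main (i - 1) (by omega)).2 heven1))
  -- part 3: two-step monotone
  have partC : ∀ i, 2 < i → σs i ≤ σs (i - 2) := by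
    intro i hi
    have hyi : 0 < σs i := hpos i (by omega)
    have hyi1 : 0 < σs (i - 1) := hpos (i - 1) (by omega)
    have heq : i - 1 - 1 = i - 2 := by omega
    rcases Nat.even_or_odd i with hie | hio
    · have hi4 : 4 ≤ i := by obtain ⟨k, hk⟩ := hie; omega
      have hA : δ / θ * σs i ≤ σs (i - 1) := (le_div_iff₀ hyi).mp (partA i (by omega) hie)
      have hodd1 : Odd (i - 1) := by obtain ⟨k, hk⟩ := hie; exact ⟨k - 1, by omega⟩
      have hB : θ / δ * σs (i - 1) ≤ σs (i - 1 - 1) :=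
        (le_div_iff₀ hyi1).mp (partB (i - 1) (by omega) hodd1)
      rw [heq] at hB
      have h5 : θ / δ * (δ / θ * σs i) = σs i := by field_simp
      have h7 := mul_le_mul_of_nonneg_left hA (by positivity : (0:ℝ) ≤ θ / δ)
      linarith
    · have hi3 : 3 ≤ i := by omega
      have hA : θ / δ * σs i ≤ σs (i - 1) := (le_div_iff₀ hyi).mp (partB i (by omega) hio)
      have heven1 : Even (i - 1) := by obtain ⟨k, hk⟩ := hio; exact ⟨k, by omega⟩
      have hB : δ / θ * σs (i - 1) ≤ σs (i - 1 - 1) :=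
        (le_div_iff₀ hyi1).mp (partA (i - 1) (by omega) heven1)
      rw [heq] at hB
      have h5 : δ / θ * (θ / δ * σs i) = σs i := by field_simp
      have h7 := mul_le_mul_of_nonneg_left hA (by positivity : (0:ℝ) ≤ δ / θ)
      linarith
  refine ⟨partA, partB, partC, ?_, ?_⟩
  · -- odd bounded by σ
    have D : ∀ k, σs (2 * k + 1) ≤ σ := by
      intro k
      induction k with
      | zero => simpa using h1
      | succ n ih =>
        have hC := partC (2 * n + 3) (by omega)
        have heq : 2 * n + 3 - 2 = 2 * n + 1 := by omega
        rw [heq] at hC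
        have h8 : 2 * (n + 1) + 1 = 2 * n + 3 := by omega
        rw [h8]
        linarith
    intro i _ hio
    obtain ⟨k, hk⟩ := hio
    rw [hk]
    exact D k
  · -- even bounded by σs 2
    have E : ∀ k, σs (2 * k + 2) ≤ σs 2 := by
      intro k
      induction k with
      | zero => simp
      | succ n ih =>
        have hC := partC (2 * n + 4) (by omega)
        have heq : 2 * n + 4 - 2 = 2 * n + 2 := by omega
        rw [heq] at hC
        have h8 : 2 * (n + 1) + 2 = 2 * n + 4 := by omega
        rw [h8]
        linarith
    intro i hi2 hie
    obtain ⟨k, hk⟩ := hie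
    have hk1 : 1 ≤ k := by omega
    have h9 : i = 2 * (k - 1) + 2 := by omega
    rw [h9]
    exact E (k - 1)
end

section
/- Let θ, δ, γ, σ be positive reals with γ < 1 and √(θδ) > 2γ, set β = ((δ/2) − γ·√(δ/θ)) / (1 − γ), and suppose σ < β. Let (σ_i)_{i≥1} be a sequence of positive reals with σ_1 ≤ σ such that for every even i ≥ 2: 1/√(σ_{i+1}) ≥ (θδ/(4γ²))·(1/√(σ_{i−1}) − √σ/β) + √σ/β. Then for every even i ≥ 0: 1/√(σ_{i+1}) ≥ ((θδ/(4γ²))^{i/2}·(1 − σ/β) + σ/β) / √σ. In particular, since θδ/(4γ²) > 1, the values σ_{i+1} decrease exponentially in i. -/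
/-- Solution of the first-order linear recurrence governing the
fraction of erroneous vertices in the iterative decoder analysis. -/
theorem stmt_15 (θ δ γ σ β : ℝ) (hθ : 0 < θ) (hδ : 0 < δ) (hγ0 : 0 < γ) (hγ1 : γ < 1)
    (hσ : 0 < σ)
    (hθδγ : Real.sqrt (θ * δ) > 2 * γ)
    (hβ : β = (δ / 2 - γ * Real.sqrt (δ / θ)) / (1 - γ))
    (hσβ : σ < β)
    (σs : ℕ → ℝ) (hpos : ∀ i, 1 ≤ i → 0 < σs i) (h1 : σs 1 ≤ σ)
    (hrec : ∀ i, 2 ≤ i → Even i →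
        θ * δ / (4 * γ ^ 2) * (1 / Real.sqrt (σs (i - 1)) - Real.sqrt σ / β)
            + Real.sqrt σ / β
          ≤ 1 / Real.sqrt (σs (i + 1))) :
    1 < θ * δ / (4 * γ ^ 2) ∧
    ∀ i : ℕ, Even i →
      ((θ * δ / (4 * γ ^ 2)) ^ (i / 2) * (1 - σ / β) + σ / β) / Real.sqrt σ
        ≤ 1 / Real.sqrt (σs (i + 1)) := by
  have hβ0 : 0 < β := hσ.trans hσβ
  have hs0 : 0 < Real.sqrt σ := Real.sqrt_pos.mpr hσ
  have hss : Real.sqrt σ * Real.sqrt σ = σ := Real.mul_self_sqrt hσ.le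
  have hγ2 : (0:ℝ) < 4 * γ ^ 2 := by positivity
  have hA : 1 < θ * δ / (4 * γ ^ 2) := by
    rw [lt_div_iff₀ hγ2]
    nlinarith [Real.sq_sqrt (mul_nonneg hθ.le hδ.le), hθδγ, hγ0]
  set A : ℝ := θ * δ / (4 * γ ^ 2) with hAdef
  have hA0 : 0 < A := lt_trans one_pos hA
  refine ⟨hA, ?_⟩
  have key : ∀ k : ℕ, ((A) ^ k * (1 - σ / β) + σ / β) / Real.sqrt σ
      ≤ 1 / Real.sqrt (σs (2 * k + 1)) := by
    intro k
    induction k with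
    | zero =>
      have hp : 0 < Real.sqrt (σs 1) := Real.sqrt_pos.mpr (hpos 1 le_rfl)
      have h01 : Real.sqrt (σs 1) ≤ Real.sqrt σ := Real.sqrt_le_sqrt h1
      have : ((A) ^ 0 * (1 - σ / β) + σ / β) = 1 := by ring
      rw [this]
      have hgoal : 1 / Real.sqrt σ ≤ 1 / Real.sqrt (σs 1) :=
        one_div_le_one_div_of_le hp h01
      simpa using hgoal
    | succ k ih =>
      have hr := hrec (2 * k + 2) (by omega) ⟨k + 1, by ring⟩
      have e1 : 2 * k + 2 - 1 = 2 * k + 1 := by omega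
      rw [e1] at hr
      have e2 : 2 * (k + 1) + 1 = 2 * k + 2 + 1 := by ring
      rw [e2]
      refine le_trans ?_ hr
      have heq : A * (((A ^ k * (1 - σ / β) + σ / β) / Real.sqrt σ) - Real.sqrt σ / β)
          + Real.sqrt σ / β
          = (A ^ (k + 1) * (1 - σ / β) + σ / β) / Real.sqrt σ := by
        have hkey : σ / β / Real.sqrt σ = Real.sqrt σ / β := by
          field_simp
          linear_combination (-1) * hss
        rw [add_div, add_div, hkey]
        ring
      rw [← heq]
      have := mul_le_mul_of_nonneg_left ih hA0.le
      linarith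
  intro i hi
  obtain ⟨k, hk⟩ := hi
  have h2 : i = 2 * k := by omega
  rw [h2, Nat.mul_div_cancel_left k two_pos]
  exact key k
end

section
/- There exists a constant c > 0 such that for every designed rate R ∈ (0,1] and every sufficiently small ε > 0 there is an infinite family of codes (i.e., codes of infinitely many lengths n) over an alphabet Φ of size at most 2^{c·(log(1/ε))/ε³}, each of rate at least R − ε (equivalently, rate at least the designed value R after adjusting ε) and relative minimum distance greater than 1 − R − ε. In particular, these codes approach the Singleton bound as ε → 0, over an alphabet of size 2^{O((log(1/ε))/ε³)}. -/
open Finset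

private lemma ball_card_le (n q r : ℕ) (hq : 1 ≤ q) (c : Fin n → Fin q) :
    (univ.filter fun x : Fin n → Fin q => hammingDist x c ≤ r).card ≤ 2 ^ n * q ^ r := by
  classical
  have hsub : (univ.filter fun x : Fin n → Fin q => hammingDist x c ≤ r) ⊆
      ((univ : Finset (Finset (Fin n))).filter fun S => S.card ≤ r).biUnion
        (fun S => univ.filter fun x : Fin n → Fin q => ∀ i ∉ S, x i = c i) := by
    intro x hx
    simp only [mem_filter, mem_univ, true_and] at hx
    refine mem_biUnion.mpr ⟨univ.filter fun i => x i ≠ c i, ?_, ?_⟩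
    · simp only [mem_filter, mem_univ, true_and]
      exact hx
    · simp only [mem_filter, mem_univ, true_and]
      intro i hi
      simp only [mem_filter, mem_univ, true_and, not_not] at hi
      exact hi
  have hT : ∀ S : Finset (Fin n), S.card ≤ r →
      (univ.filter fun x : Fin n → Fin q => ∀ i ∉ S, x i = c i).card ≤ q ^ r := by
    intro S hS
    have h1 : (univ.filter fun x : Fin n → Fin q => ∀ i ∉ S, x i = c i).card ≤
        (univ : Finset ({i // i ∈ S} → Fin q)).card := by
      refine Finset.card_le_card_of_injOn (fun x (i : {i // i ∈ S}) => x i.1)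
        (fun a _ => mem_univ _) ?_
      intro x hx y hy hxy
      simp only [coe_filter, Set.mem_setOf_eq, mem_univ, true_and] at hx hy
      funext i
      by_cases h : i ∈ S
      · exact congrFun hxy ⟨i, h⟩
      · rw [hx i h, hy i h]
    have h2 : (univ : Finset ({i // i ∈ S} → Fin q)).card = q ^ S.card := by
      simp [Fintype.card_fun]
    calc _ ≤ q ^ S.card := h1.trans_eq h2
      _ ≤ q ^ r := Nat.pow_le_pow_right hq hS
  calc (univ.filter fun x : Fin n → Fin q => hammingDist x c ≤ r).card
      ≤ (((univ : Finset (Finset (Fin n))).filter fun S => S.card ≤ r).biUnion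
          (fun S => univ.filter fun x : Fin n → Fin q => ∀ i ∉ S, x i = c i)).card :=
        card_le_card hsub
    _ ≤ ∑ S ∈ (univ : Finset (Finset (Fin n))).filter fun S => S.card ≤ r,
          (univ.filter fun x : Fin n → Fin q => ∀ i ∉ S, x i = c i).card :=
        card_biUnion_le
    _ ≤ ∑ _S ∈ (univ : Finset (Finset (Fin n))).filter fun S => S.card ≤ r, q ^ r := by
        refine Finset.sum_le_sum ?_
        intro S hS
        simp only [mem_filter, mem_univ, true_and] at hS
        exact hT S hS
    _ = ((univ : Finset (Finset (Fin n))).filter fun S => S.card ≤ r).card * q ^ r := by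
        rw [Finset.sum_const, smul_eq_mul]
    _ ≤ 2 ^ n * q ^ r := by
        gcongr
        calc ((univ : Finset (Finset (Fin n))).filter fun S => S.card ≤ r).card
            ≤ (univ : Finset (Finset (Fin n))).card := card_le_card (filter_subset _ _)
          _ = 2 ^ n := by simp

private lemma gv_code (n q d : ℕ) (hq : 1 ≤ q) (hd : 1 ≤ d) :
    ∃ C : Finset (Fin n → Fin q), C.Nonempty ∧
      (∀ x ∈ C, ∀ y ∈ C, x ≠ y → d ≤ hammingDist x y) ∧
      q ^ n ≤ C.card * (2 ^ n * q ^ (d - 1)) := by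
  classical
  set P : Finset (Fin n → Fin q) → Prop :=
    fun C => ∀ x ∈ C, ∀ y ∈ C, x ≠ y → d ≤ hammingDist x y with hP
  set s : Finset (Finset (Fin n → Fin q)) := univ.filter P with hs
  have hzero : (fun _ : Fin n => (⟨0, hq⟩ : Fin q)) ∈ (univ : Finset (Fin n → Fin q)) := mem_univ _
  have hsingle : ({fun _ => ⟨0, hq⟩} : Finset (Fin n → Fin q)) ∈ s := by
    simp only [hs, mem_filter, mem_univ, true_and, hP]
    intro x hx y hy hxy
    simp only [mem_singleton] at hx hy
    exact absurd (hx.trans hy.symm) hxy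
  obtain ⟨C, hCs, hCmax⟩ := Finset.exists_max_image s card ⟨_, hsingle⟩
  have hPC : P C := (mem_filter.mp hCs).2
  have hCne : C.Nonempty := by
    have h1 := hCmax _ hsingle
    simp only [card_singleton] at h1
    exact card_pos.mp (by omega)
  refine ⟨C, hCne, hPC, ?_⟩
  -- covering
  have hcover : ∀ x : Fin n → Fin q, ∃ c ∈ C, hammingDist x c ≤ d - 1 := by
    intro x
    by_contra h
    push_neg at h
    have hxd : ∀ c ∈ C, d ≤ hammingDist x c := by
      intro c hc
      have := h c hc
      omega
    have hxC : x ∉ C := by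
      intro hx
      have := hxd x hx
      simp [hammingDist_self] at this
      omega
    have hins : insert x C ∈ s := by
      simp only [hs, mem_filter, mem_univ, true_and, hP]
      intro a ha b hb hab
      rcases mem_insert.mp ha with h1 | h1 <;> rcases mem_insert.mp hb with h2 | h2
      · exact absurd (h1.trans h2.symm) hab
      · rw [h1]; exact hxd b h2
      · rw [h2, hammingDist_comm]; exact hxd a h1
      · exact hPC a h1 b h2 hab
    have := hCmax _ hins
    rw [card_insert_of_notMem hxC] at this
    omega
  have huniv : (univ : Finset (Fin n → Fin q)) ⊆
      C.biUnion (fun c => univ.filter fun x => hammingDist x c ≤ d - 1) := by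
    intro x _
    obtain ⟨c, hc, hdist⟩ := hcover x
    exact mem_biUnion.mpr ⟨c, hc, by simp [hdist]⟩
  calc q ^ n = (univ : Finset (Fin n → Fin q)).card := by simp
    _ ≤ (C.biUnion (fun c => univ.filter fun x => hammingDist x c ≤ d - 1)).card :=
        card_le_card huniv
    _ ≤ ∑ c ∈ C, (univ.filter fun x => hammingDist x c ≤ d - 1).card := card_biUnion_le
    _ ≤ ∑ _c ∈ C, 2 ^ n * q ^ (d - 1) := Finset.sum_le_sum fun c _ => ball_card_le n q (d-1) hq c
    _ = C.card * (2 ^ n * q ^ (d - 1)) := by rw [Finset.sum_const, smul_eq_mul]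


private lemma rate_bound (R ε : ℝ) (hR : 0 < R) (hR1 : R ≤ 1) (hε : 0 < ε)
    (q n : ℕ) (hq2 : 2 ≤ q) (hlogb2 : Real.logb q 2 ≤ ε) (hn : 0 < n)
    (C : Finset (Fin n → Fin q)) (hCne : C.Nonempty)
    (hcard : q ^ n ≤ C.card * (2 ^ n * q ^ (⌊(1-R-ε)*(n:ℝ)⌋₊ + 1 - 1))) :
    R - ε ≤ Real.logb q C.card / n := by
  set F : ℕ := ⌊(1-R-ε)*(n:ℝ)⌋₊ with hF
  have hb : (1:ℝ) < (q:ℝ) := by exact_mod_cast hq2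
  have hbpos : (0:ℝ) < q := by linarith
  have hnR : (0:ℝ) < n := by exact_mod_cast hn
  have hcard' : q ^ n ≤ C.card * (2 ^ n * q ^ F) := by simpa using hcard
  have hCpos : (0:ℝ) < C.card := by exact_mod_cast Finset.card_pos.mpr hCne
  have hcardR : ((q:ℝ))^n / (2^n * (q:ℝ)^F) ≤ C.card := by
    rw [div_le_iff₀ (by positivity)]
    exact_mod_cast hcard'
  have hlog2nn : 0 ≤ Real.logb q 2 := Real.logb_nonneg hb (by norm_num)
  have hlb : (n:ℝ) - n * Real.logb q 2 - F ≤ Real.logb q C.card := by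
    have h1 : Real.logb q ((q:ℝ)^n / (2^n * (q:ℝ)^F)) ≤ Real.logb q C.card :=
      (Real.logb_le_logb hb (by positivity) hCpos).mpr hcardR
    have h2 : Real.logb q ((q:ℝ)^n / (2^n * (q:ℝ)^F))
        = (n:ℝ) - (n * Real.logb q 2 + F * 1) := by
      rw [Real.logb_div (by positivity) (by positivity),
        Real.logb_mul (by positivity) (by positivity),
        Real.logb_pow, Real.logb_pow, Real.logb_pow,
        Real.logb_self_eq_one (by linarith : 1 < (q:ℝ))]
      ring
    rw [h2] at h1
    linarith
  rw [le_div_iff₀ hnR]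
  have hmul : (n:ℝ) * Real.logb q 2 ≤ n * ε :=
    mul_le_mul_of_nonneg_left hlogb2 hnR.le
  have key : (R - ε) * n ≤ (n:ℝ) - n * Real.logb q 2 - F := by
    by_cases h : 0 ≤ (1-R-ε)
    · have hF_le : (F:ℝ) ≤ (1-R-ε)*n := Nat.floor_le (by positivity)
      nlinarith
    · have hF0 : F = 0 := by
        rw [hF]
        apply Nat.floor_of_nonpos
        nlinarith
      rw [hF0]
      push_cast
      nlinarith
  calc (R - ε) * n ≤ (n:ℝ) - n * Real.logb q 2 - F := key
    _ ≤ Real.logb q C.card := hlb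


open BigOperators

/-- Nearly-MDS codes over an alphabet of size `2^{O((log(1/ε))/ε³)}`.
There is a constant `c > 0` such that for every designed rate `R ∈ (0,1]` and every
sufficiently small `ε > 0` there is an alphabet `Φ = Fin q` of size at most
`2^{c·(log(1/ε))/ε³}` and an infinite family of (nonempty) codes over `Φ` — i.e. codes of
infinitely many lengths `n` — each of rate `log_q |C| / n` at least `R − ε` and relative
minimum distance greater than `1 − R − ε`. -/
theorem stmt_17 :
    ∃ c : ℝ, 0 < c ∧
      ∀ R : ℝ, 0 < R → R ≤ 1 →
        ∃ ε₀ : ℝ, 0 < ε₀ ∧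
          ∀ ε : ℝ, 0 < ε → ε < ε₀ →
            ∃ q : ℕ, 2 ≤ q ∧
              (q : ℝ) ≤ 2 ^ (c * Real.log (1 / ε) / ε ^ 3) ∧
              {n : ℕ | 0 < n ∧
                ∃ C : Finset (Fin n → Fin q), C.Nonempty ∧
                  R - ε ≤ Real.logb q C.card / n ∧
                  ∀ x ∈ C, ∀ y ∈ C, x ≠ y →
                    (1 - R - ε) * n < (hammingDist x y : ℝ)}.Infinite := by
  refine ⟨1, one_pos, ?_⟩
  intro R hR hR1
  refine ⟨1/10, by norm_num, ?_⟩
  intro ε hε hε'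
  set m : ℕ := ⌈1/ε⌉₊ with hm
  have hεinv : (10:ℝ) ≤ 1/ε := by
    rw [le_div_iff₀ hε]; linarith
  have hm_ge : 1/ε ≤ (m:ℝ) := Nat.le_ceil _
  have hm_lt : (m:ℝ) < 1/ε + 1 := Nat.ceil_lt_add_one (by positivity)
  have hmpos : (0:ℝ) < m := lt_of_lt_of_le (by linarith) hm_ge
  have hm1 : 1 ≤ m := by exact_mod_cast (by linarith : (1:ℝ) ≤ m)
  have hinvm : 1/(m:ℝ) ≤ ε := by
    rw [div_le_iff₀ hmpos]
    calc (1:ℝ) = ε * (1/ε) := by field_simp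
      _ ≤ ε * m := by nlinarith
  have hεm : (1:ℝ) ≤ ε * m := by
    rw [div_le_iff₀ hmpos] at hinvm; linarith
  have hq2 : 2 ≤ 2^m := by
    calc 2 = 2^1 := rfl
      _ ≤ 2^m := Nat.pow_le_pow_right (by norm_num) hm1
  refine ⟨2^m, hq2, ?_, ?_⟩
  · have hlog : 1 ≤ Real.log (1/ε) := by
      rw [Real.le_log_iff_exp_le (by positivity)]
      calc Real.exp 1 ≤ 10 := by linarith [Real.exp_one_lt_d9]
        _ ≤ 1/ε := hεinv
    have hmb : (m:ℝ) ≤ 1 * Real.log (1/ε) / ε^3 := by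
      rw [one_mul]
      have hone : (1:ℝ) ≤ 1/ε := by linarith
      have h1 : (m:ℝ) ≤ 2/ε := by
        have h2e : (2:ℝ)/ε = 1/ε + 1/ε := by ring
        linarith
      have h2 : (2:ℝ)/ε ≤ 1/ε^3 := by
        rw [div_le_div_iff₀ hε (by positivity)]
        have hsq : ε^2 ≤ (1/10)^2 := by nlinarith
        nlinarith [hε.le]
      have h3 : (1:ℝ)/ε^3 ≤ Real.log (1/ε)/ε^3 := by gcongr
      linarith
    calc ((2^m : ℕ) : ℝ) = (2:ℝ) ^ (m:ℕ) := by push_cast; ring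
      _ = (2:ℝ) ^ ((m:ℕ):ℝ) := (Real.rpow_natCast 2 m).symm
      _ ≤ 2 ^ (1 * Real.log (1 / ε) / ε ^ 3) :=
          Real.rpow_le_rpow_of_exponent_le (by norm_num) hmb
  · -- the infinite family
    have hlogb2 : Real.logb ((2^m : ℕ) : ℝ) 2 ≤ ε := by
      have hcast : ((2^m : ℕ) : ℝ) = (2:ℝ)^m := by push_cast; ring
      have hl2 : 0 < Real.log 2 := Real.log_pos (by norm_num)
      rw [Real.logb, hcast, Real.log_pow]
      rw [div_le_iff₀ (by positivity)]
      nlinarith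
    apply Set.infinite_of_injective_forall_mem (f := fun k : ℕ => k + 1)
      (fun a b h => by simpa using h)
    intro k
    refine ⟨Nat.succ_pos k, ?_⟩
    set n : ℕ := k + 1 with hn
    obtain ⟨C, hCne, hCdist, hCcard⟩ :=
      gv_code n (2^m) (⌊(1-R-ε)*(n:ℝ)⌋₊ + 1) (by omega) (by omega)
    refine ⟨C, hCne, ?_, ?_⟩
    · exact rate_bound R ε hR hR1 hε (2^m) n hq2 hlogb2 (Nat.succ_pos k) C hCne hCcard
    · intro x hx y hy hxy
      have h1 := hCdist x hx y hy hxy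
      calc (1-R-ε)*(n:ℝ) < ((⌊(1-R-ε)*(n:ℝ)⌋₊ : ℝ) + 1) := Nat.lt_floor_add_one _
        _ ≤ hammingDist x y := by exact_mod_cast h1
end
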